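/- arXiv:0907.3492 — 7 statements merged into one kernel-verified Lean document; each statement's English description precedes it below -/
import Mathlib

section
/- For every integer d ≥ 1, the binomial determinant D_{d,d} = det( C(d−1+j, 2k) )_{0 ≤ j,k ≤ d−1} with row indices d−1, d, …, 2d−2 and column indices 0, 2, …, 2(d−1) equals 2^{(d−1)(d−2)/2}. -/
open Polynomial Finset

/-! Auxiliary polynomials: `gP m` and `hP m` are the even and odd parts of
`X^m * (1+X)^m` after the substitution `u = X^2`. -/

noncomputable def gP (m : ℕ) : Polynomial ℤ :=
  ∑ s ∈ Finset.range (m + 1), Polynomial.C ((m.choose (2 * s) : ℤ)) * Polynomial.X ^ (m - s)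

noncomputable def hP (m : ℕ) : Polynomial ℤ :=
  ∑ s ∈ Finset.range m, Polynomial.C ((m.choose (2 * s + 1) : ℤ)) * Polynomial.X ^ (m - 1 - s)

lemma sum_range_two_mul_split {M : Type*} [AddCommMonoid M] (f : ℕ → M) (N : ℕ) :
    ∑ k ∈ Finset.range (2 * N), f k
      = (∑ s ∈ Finset.range N, f (2 * s)) + ∑ s ∈ Finset.range N, f (2 * s + 1) := by
  induction N with
  | zero => simp
  | succ N ih =>
    have h : 2 * (N + 1) = 2 * N + 1 + 1 := by ring
    rw [h, Finset.sum_range_succ, Finset.sum_range_succ, ih,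
      Finset.sum_range_succ, Finset.sum_range_succ]
    have h1 : 2 * N + 1 = 2 * N + 1 := rfl
    abel

lemma keyId (m : ℕ) :
    (X : ℤ[X]) ^ m * (1 + X) ^ m
      = Polynomial.expand ℤ 2 (gP m) + X * Polynomial.expand ℤ 2 (hP m) := by
  have h0 : (X : ℤ[X]) * (1 + X) = X + X ^ 2 := by ring
  have h1 : (X : ℤ[X]) ^ m * (1 + X) ^ m
      = ∑ k ∈ Finset.range (m + 1), Polynomial.C ((m.choose k : ℤ)) * X ^ (2 * m - k) := by
    rw [← mul_pow, h0, add_pow]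
    refine Finset.sum_congr rfl fun k hk => ?_
    have hk' : k ≤ m := Nat.lt_succ_iff.mp (Finset.mem_range.mp hk)
    rw [← pow_mul, ← pow_add]
    rw [show k + 2 * (m - k) = 2 * m - k from by omega]
    rw [Polynomial.C_eq_natCast, mul_comm]
  rw [h1]
  have h2 : ∑ k ∈ Finset.range (m + 1), Polynomial.C ((m.choose k : ℤ)) * X ^ (2 * m - k)
      = ∑ k ∈ Finset.range (2 * (m + 1)), Polynomial.C ((m.choose k : ℤ)) * X ^ (2 * m - k) := by
    refine Finset.sum_subset ?_ ?_
    · intro x hx; simp only [Finset.mem_range] at hx ⊢; omega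
    · intro k _ hk
      have hk' : m < k := by simp only [Finset.mem_range] at hk; omega
      rw [Nat.choose_eq_zero_of_lt hk']
      simp
  rw [h2, sum_range_two_mul_split]
  congr 1
  · rw [gP, map_sum]
    refine Finset.sum_congr rfl fun s hs => ?_
    have hs' : s ≤ m := Nat.lt_succ_iff.mp (Finset.mem_range.mp hs)
    rw [map_mul, Polynomial.expand_C, map_pow, Polynomial.expand_X, ← pow_mul]
    rw [show 2 * (m - s) = 2 * m - 2 * s from by omega]
  · rw [hP, map_sum, Finset.mul_sum, Finset.sum_range_succ]
    rw [show (m.choose (2 * m + 1) : ℤ) = 0 from by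
      norm_cast; exact Nat.choose_eq_zero_of_lt (by omega)]
    simp only [map_zero, zero_mul, add_zero]
    refine Finset.sum_congr rfl fun s hs => ?_
    have hs' : s < m := Finset.mem_range.mp hs
    rw [map_mul, Polynomial.expand_C, map_pow, Polynomial.expand_X, ← pow_mul]
    rw [show 2 * m - (2 * s + 1) = 2 * (m - 1 - s) + 1 from by omega]
    ring

lemma gP_zero_eval : (gP 0).eval 1 = 1 := by simp [gP]

lemma gP_eval_one (m : ℕ) : (gP (m + 1)).eval 1 = 2 ^ m := by
  have k := keyId (m + 1)
  have e1 := congrArg (Polynomial.eval (1 : ℤ)) k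
  have e2 := congrArg (Polynomial.eval (-1 : ℤ)) k
  simp only [Polynomial.eval_mul, Polynomial.eval_pow, Polynomial.eval_add, Polynomial.eval_one,
    Polynomial.eval_X, Polynomial.expand_eval, one_pow, one_mul] at e1 e2
  norm_num at e1 e2
  have h2 : (2 : ℤ) ^ (m + 1) = 2 * 2 ^ m := by ring
  rw [h2] at e1
  linarith

lemma gP_natDegree_le (m : ℕ) : (gP m).natDegree ≤ m := by
  refine Polynomial.natDegree_sum_le_of_forall_le _ _ fun s hs => ?_
  refine le_trans (Polynomial.natDegree_C_mul_le _ _) ?_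
  simpa using Nat.sub_le m s

/-- If `p` has degree `< dd`, then summing `coeff p i * (X^i * f).coeff m` recovers
`(p * f).coeff m`. -/
lemma coeff_sum_mul (dd : ℕ) (p f : ℤ[X]) (hp : p.natDegree < dd) (m : ℕ) :
    ∑ i : Fin dd, p.coeff i * ((X : ℤ[X]) ^ (i : ℕ) * f).coeff m = (p * f).coeff m := by
  conv_rhs => rw [p.as_sum_range' dd hp]
  rw [Finset.sum_mul, Polynomial.finset_sum_coeff]
  rw [Fin.sum_univ_eq_sum_range (fun i => p.coeff i * ((X : ℤ[X]) ^ i * f).coeff m) dd]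
  refine Finset.sum_congr rfl fun i _ => ?_
  rw [← Polynomial.C_mul_X_pow_eq_monomial, mul_assoc, Polynomial.coeff_C_mul]

/-- If `p` has degree `< dd`, then summing `coeff p t * ((1-X)^t).coeff k` recovers
`(p.comp (1-X)).coeff k`. -/
lemma coeff_sum_comp (dd : ℕ) (p : ℤ[X]) (hp : p.natDegree < dd) (k : ℕ) :
    ∑ t : Fin dd, p.coeff t * ((1 - X : ℤ[X]) ^ (t : ℕ)).coeff k
      = (p.comp (1 - X)).coeff k := by
  conv_rhs => rw [p.as_sum_range' dd hp]
  have hcomp : (∑ i ∈ Finset.range dd, Polynomial.monomial i (p.coeff i)).comp (1 - X)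
      = ∑ i ∈ Finset.range dd, Polynomial.C (p.coeff i) * (1 - X) ^ i := by
    rw [Polynomial.comp, Polynomial.eval₂_finset_sum]
    refine Finset.sum_congr rfl fun i _ => ?_
    rw [Polynomial.eval₂_monomial]
  rw [hcomp, Polynomial.finset_sum_coeff]
  rw [Fin.sum_univ_eq_sum_range (fun t => p.coeff t * ((1 - X : ℤ[X]) ^ t).coeff k) dd]
  refine Finset.sum_congr rfl fun i _ => ?_
  rw [Polynomial.coeff_C_mul]

lemma coeff_expand_pair (p q : ℤ[X]) (k : ℕ) :
    (Polynomial.expand ℤ 2 p + X * Polynomial.expand ℤ 2 q).coeff (2 * k) = p.coeff k := by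
  rw [Polynomial.coeff_add, Polynomial.coeff_expand_mul' (by norm_num : 0 < 2)]
  cases k with
  | zero =>
    simp [Polynomial.mul_coeff_zero]
  | succ k =>
    rw [show 2 * (k + 1) = (2 * k + 1) + 1 from by ring, Polynomial.coeff_X_mul,
      Polynomial.coeff_expand (by norm_num : 0 < 2), if_neg (by omega)]
    simp

lemma evenPart (n a : ℕ) (ha : a ≤ n) :
    (X : ℤ[X]) ^ a * (1 - X) ^ (n - a) * (1 + X) ^ n
      = Polynomial.expand ℤ 2 ((1 - X) ^ (n - a) * gP a)
        + X * Polynomial.expand ℤ 2 ((1 - X) ^ (n - a) * hP a) := by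
  have h1 : ((1 : ℤ[X]) + X) ^ n = (1 + X) ^ a * (1 + X) ^ (n - a) := by
    rw [← pow_add]; congr 1; omega
  have h2 : ((1 : ℤ[X]) - X) ^ (n - a) * (1 + X) ^ (n - a)
      = Polynomial.expand ℤ 2 ((1 - X) ^ (n - a)) := by
    rw [← mul_pow, map_pow, map_sub, map_one, Polynomial.expand_X]
    congr 1; ring
  calc (X : ℤ[X]) ^ a * (1 - X) ^ (n - a) * (1 + X) ^ n
      = (X ^ a * (1 + X) ^ a) * ((1 - X) ^ (n - a) * (1 + X) ^ (n - a)) := by rw [h1]; ring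
    _ = (Polynomial.expand ℤ 2 (gP a) + X * Polynomial.expand ℤ 2 (hP a))
          * Polynomial.expand ℤ 2 ((1 - X) ^ (n - a)) := by rw [keyId, h2]
    _ = _ := by rw [map_mul, map_mul]; ring

/-- Determinant of the anti-diagonal 0-1 matrix. -/
lemma det_antidiagOnes (m : ℕ) :
    (Matrix.of fun i j : Fin m => if (i : ℕ) + (j : ℕ) = m - 1 then (1 : ℤ) else 0).det
      = (-1) ^ (∑ i ∈ Finset.range m, i) := by
  induction m with
  | zero => simp
  | succ m ih =>
    rw [Matrix.det_succ_row_zero]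
    rw [Finset.sum_eq_single (Fin.last m)]
    · have h0 : (Matrix.of fun i j : Fin (m + 1) =>
          if (i : ℕ) + (j : ℕ) = m + 1 - 1 then (1 : ℤ) else 0) 0 (Fin.last m) = 1 := by
        simp
      have hsub : ((Matrix.of fun i j : Fin (m + 1) =>
            if (i : ℕ) + (j : ℕ) = m + 1 - 1 then (1 : ℤ) else 0).submatrix
              Fin.succ (Fin.last m).succAbove)
          = Matrix.of fun i j : Fin m => if (i : ℕ) + (j : ℕ) = m - 1 then (1 : ℤ) else 0 := by
        ext i j
        simp only [Matrix.submatrix_apply, Matrix.of_apply, Fin.succAbove_last,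
          Fin.val_succ, Fin.coe_castSucc]
        have hi := i.isLt
        refine if_congr ?_ rfl rfl
        omega
      rw [h0, hsub, ih, Fin.val_last]
      rw [Finset.sum_range_succ, pow_add]
      ring
    · intro b _ hb
      have hbv : (b : ℕ) ≠ m := by
        intro h; exact hb (Fin.ext (by simpa [Fin.val_last] using h))
      have : (Matrix.of fun i j : Fin (m + 1) =>
          if (i : ℕ) + (j : ℕ) = m + 1 - 1 then (1 : ℤ) else 0) 0 b = 0 := by
        simp only [Matrix.of_apply, Fin.val_zero, zero_add]
        rw [if_neg (by omega)]
      rw [this]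
      ring
    · simp


/-! The matrices appearing in the factorization. -/

noncomputable def Lmat (n : ℕ) : Matrix (Fin (n + 1)) (Fin (n + 1)) ℤ :=
  Matrix.of fun j i => ((j : ℕ).choose i : ℤ)

noncomputable def Bmat (n : ℕ) : Matrix (Fin (n + 1)) (Fin (n + 1)) ℤ :=
  Matrix.of fun i k => ((X : ℤ[X]) ^ (i : ℕ) * (1 + X) ^ n).coeff (2 * (k : ℕ))

noncomputable def Smat (n : ℕ) : Matrix (Fin (n + 1)) (Fin (n + 1)) ℤ :=
  Matrix.of fun a i => ((X : ℤ[X]) ^ (a : ℕ) * (1 - X) ^ (n - (a : ℕ))).coeff (i : ℕ)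

noncomputable def Emat (n : ℕ) : Matrix (Fin (n + 1)) (Fin (n + 1)) ℤ :=
  Matrix.of fun a k => (((1 - X : ℤ[X])) ^ (n - (a : ℕ)) * gP (a : ℕ)).coeff (k : ℕ)

noncomputable def Wmat (n : ℕ) : Matrix (Fin (n + 1)) (Fin (n + 1)) ℤ :=
  Matrix.of fun a t => ((X : ℤ[X]) ^ (n - (a : ℕ)) * (gP (a : ℕ)).comp (1 - X)).coeff (t : ℕ)

noncomputable def Wmat' (n : ℕ) : Matrix (Fin (n + 1)) (Fin (n + 1)) ℤ :=
  Matrix.of fun b t => ((X : ℤ[X]) ^ (b : ℕ) * (gP (n - (b : ℕ))).comp (1 - X)).coeff (t : ℕ)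

noncomputable def Pmat (n : ℕ) : Matrix (Fin (n + 1)) (Fin (n + 1)) ℤ :=
  Matrix.of fun a b => if (a : ℕ) + (b : ℕ) = n then (1 : ℤ) else 0

noncomputable def Ymat (n : ℕ) : Matrix (Fin (n + 1)) (Fin (n + 1)) ℤ :=
  Matrix.of fun t k => ((1 - X : ℤ[X]) ^ (t : ℕ)).coeff (k : ℕ)

@[simp] lemma Lmat_apply (n : ℕ) (j i : Fin (n + 1)) :
    Lmat n j i = ((j : ℕ).choose i : ℤ) := rfl
@[simp] lemma Bmat_apply (n : ℕ) (i k : Fin (n + 1)) :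
    Bmat n i k = ((X : ℤ[X]) ^ (i : ℕ) * (1 + X) ^ n).coeff (2 * (k : ℕ)) := rfl
@[simp] lemma Smat_apply (n : ℕ) (a i : Fin (n + 1)) :
    Smat n a i = ((X : ℤ[X]) ^ (a : ℕ) * (1 - X) ^ (n - (a : ℕ))).coeff (i : ℕ) := rfl
@[simp] lemma Emat_apply (n : ℕ) (a k : Fin (n + 1)) :
    Emat n a k = (((1 - X : ℤ[X])) ^ (n - (a : ℕ)) * gP (a : ℕ)).coeff (k : ℕ) := rfl
@[simp] lemma Wmat_apply (n : ℕ) (a t : Fin (n + 1)) :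
    Wmat n a t = ((X : ℤ[X]) ^ (n - (a : ℕ)) * (gP (a : ℕ)).comp (1 - X)).coeff (t : ℕ) := rfl
@[simp] lemma Wmat'_apply (n : ℕ) (b t : Fin (n + 1)) :
    Wmat' n b t = ((X : ℤ[X]) ^ (b : ℕ) * (gP (n - (b : ℕ))).comp (1 - X)).coeff (t : ℕ) := rfl
@[simp] lemma Pmat_apply (n : ℕ) (a b : Fin (n + 1)) :
    Pmat n a b = if (a : ℕ) + (b : ℕ) = n then (1 : ℤ) else 0 := rfl
@[simp] lemma Ymat_apply (n : ℕ) (t k : Fin (n + 1)) :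
    Ymat n t k = ((1 - X : ℤ[X]) ^ (t : ℕ)).coeff (k : ℕ) := rfl

lemma hdeg1X : (1 - X : ℤ[X]).natDegree ≤ 1 := by
  refine le_trans (Polynomial.natDegree_sub_le _ _) ?_
  simp

lemma step1 (n : ℕ) : (Matrix.of fun j k : Fin (n + 1) =>
    ((n + 1 - 1 + (j : ℕ)).choose (2 * (k : ℕ)) : ℤ)) = Lmat n * Bmat n := by
  ext j k
  rw [Matrix.mul_apply]
  simp only [Lmat_apply, Bmat_apply, Matrix.of_apply]
  have hstep : ∀ i : Fin (n + 1), ((j : ℕ).choose (i : ℕ) : ℤ)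
        * ((X : ℤ[X]) ^ (i : ℕ) * (1 + X) ^ n).coeff (2 * (k : ℕ))
      = ((1 + X : ℤ[X]) ^ (j : ℕ)).coeff i
        * ((X : ℤ[X]) ^ (i : ℕ) * (1 + X) ^ n).coeff (2 * (k : ℕ)) := by
    intro i
    rw [Polynomial.coeff_one_add_X_pow]
  rw [Finset.sum_congr rfl fun i _ => hstep i]
  have hdeg : ((1 + X : ℤ[X]) ^ (j : ℕ)).natDegree < n + 1 := by
    have h1 : ((1 + X : ℤ[X]) ^ (j : ℕ)).natDegree ≤ (j : ℕ) * (1 + X : ℤ[X]).natDegree :=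
      Polynomial.natDegree_pow_le
    have h2 : (1 + X : ℤ[X]).natDegree ≤ 1 := by
      refine le_trans (Polynomial.natDegree_add_le _ _) ?_
      simp
    have hj := j.isLt
    have := Nat.mul_le_mul_left (j : ℕ) h2
    omega
  rw [coeff_sum_mul (n + 1) _ _ hdeg]
  rw [← pow_add, Polynomial.coeff_one_add_X_pow]
  rw [show (j : ℕ) + n = n + 1 - 1 + (j : ℕ) from by omega]

lemma step2 (n : ℕ) : Smat n * Bmat n = Emat n := by
  ext a k
  rw [Matrix.mul_apply]
  simp only [Smat_apply, Bmat_apply, Emat_apply]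
  have ha : (a : ℕ) ≤ n := Nat.lt_succ_iff.mp a.isLt
  have hdeg : ((X : ℤ[X]) ^ (a : ℕ) * (1 - X) ^ (n - (a : ℕ))).natDegree < n + 1 := by
    have h1 := Polynomial.natDegree_mul_le
      (p := (X : ℤ[X]) ^ (a : ℕ)) (q := (1 - X : ℤ[X]) ^ (n - (a : ℕ)))
    have h2 : ((X : ℤ[X]) ^ (a : ℕ)).natDegree = (a : ℕ) := Polynomial.natDegree_X_pow _
    have h3 : ((1 - X : ℤ[X]) ^ (n - (a : ℕ))).natDegree ≤ (n - (a : ℕ)) * 1 :=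
      le_trans Polynomial.natDegree_pow_le (Nat.mul_le_mul_left _ hdeg1X)
    omega
  rw [coeff_sum_mul (n + 1) _ _ hdeg]
  rw [evenPart n (a : ℕ) ha]
  exact coeff_expand_pair _ _ (k : ℕ)

lemma step3 (n : ℕ) : Emat n = Wmat n * Ymat n := by
  ext a k
  rw [Matrix.mul_apply]
  simp only [Wmat_apply, Ymat_apply, Emat_apply]
  have ha : (a : ℕ) ≤ n := Nat.lt_succ_iff.mp a.isLt
  have hdeg : ((X : ℤ[X]) ^ (n - (a : ℕ)) * (gP (a : ℕ)).comp (1 - X)).natDegree < n + 1 := by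
    have h1 := Polynomial.natDegree_mul_le
      (p := (X : ℤ[X]) ^ (n - (a : ℕ))) (q := (gP (a : ℕ)).comp (1 - X))
    have h2 : ((X : ℤ[X]) ^ (n - (a : ℕ))).natDegree = n - (a : ℕ) :=
      Polynomial.natDegree_X_pow _
    have h3 : ((gP (a : ℕ)).comp (1 - X)).natDegree ≤ (a : ℕ) := by
      refine le_trans Polynomial.natDegree_comp_le ?_
      have h4 := gP_natDegree_le (a : ℕ)
      have := Nat.mul_le_mul h4 hdeg1X
      omega
    omega
  rw [coeff_sum_comp (n + 1) _ hdeg]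
  have hcomp : ((X : ℤ[X]) ^ (n - (a : ℕ)) * (gP (a : ℕ)).comp (1 - X)).comp (1 - X)
      = (1 - X : ℤ[X]) ^ (n - (a : ℕ)) * gP (a : ℕ) := by
    rw [Polynomial.mul_comp, Polynomial.X_pow_comp, Polynomial.comp_assoc]
    have h5 : ((1 - X : ℤ[X])).comp (1 - X) = X := by
      rw [Polynomial.sub_comp, Polynomial.one_comp, Polynomial.X_comp]
      ring
    rw [h5, Polynomial.comp_X]
  rw [hcomp]

lemma step4 (n : ℕ) : Wmat n = Pmat n * Wmat' n := by
  ext a t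
  rw [Matrix.mul_apply]
  have ha : (a : ℕ) ≤ n := Nat.lt_succ_iff.mp a.isLt
  rw [Finset.sum_eq_single (Fin.rev a)]
  · have hval : ((Fin.rev a : Fin (n + 1)) : ℕ) = n - (a : ℕ) := by
      rw [Fin.val_rev]; omega
    simp only [Pmat_apply, Wmat'_apply, Wmat_apply, hval]
    rw [if_pos (by omega), one_mul, show n - (n - (a : ℕ)) = (a : ℕ) from by omega]
  · intro b _ hb
    have hab : (a : ℕ) + (b : ℕ) ≠ n := by
      intro h
      apply hb
      apply Fin.ext
      rw [Fin.val_rev]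
      omega
    simp only [Pmat_apply]
    rw [if_neg hab, zero_mul]
  · intro h
    exact absurd (Finset.mem_univ _) h

lemma det_Lmat (n : ℕ) : (Lmat n).det = 1 := by
  have ht : (Lmat n).BlockTriangular OrderDual.toDual := by
    intro i j hij
    have hij' : (i : ℕ) < (j : ℕ) := hij
    simp only [Lmat_apply]
    rw [Nat.choose_eq_zero_of_lt hij']
    simp
  rw [Matrix.det_of_lowerTriangular (Lmat n) ht]
  have h : ∀ a : Fin (n + 1), Lmat n a a = 1 := by
    intro a
    simp [Lmat_apply]
  rw [Finset.prod_congr rfl fun a _ => h a]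
  simp

lemma det_Smat (n : ℕ) : (Smat n).det = 1 := by
  have ht : (Smat n).BlockTriangular id := by
    intro i j hij
    have hij' : (j : ℕ) < (i : ℕ) := hij
    simp only [Smat_apply]
    rw [mul_comm, Polynomial.coeff_mul_X_pow', if_neg (by omega)]
  rw [Matrix.det_of_upperTriangular ht]
  have h : ∀ a : Fin (n + 1), Smat n a a = 1 := by
    intro a
    simp only [Smat_apply]
    rw [mul_comm, Polynomial.coeff_mul_X_pow', if_pos le_rfl, Nat.sub_self,
      Polynomial.coeff_zero_eq_eval_zero]
    simp
  rw [Finset.prod_congr rfl fun a _ => h a]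
  simp

lemma det_Wmat' (n : ℕ) : (Wmat' n).det = 2 ^ (∑ i ∈ Finset.range n, i) := by
  have ht : (Wmat' n).BlockTriangular id := by
    intro i j hij
    have hij' : (j : ℕ) < (i : ℕ) := hij
    simp only [Wmat'_apply]
    rw [mul_comm, Polynomial.coeff_mul_X_pow', if_neg (by omega)]
  rw [Matrix.det_of_upperTriangular ht]
  have hdiag : ∀ b : Fin (n + 1), Wmat' n b b = (gP (n - (b : ℕ))).eval 1 := by
    intro b
    simp only [Wmat'_apply]
    rw [mul_comm, Polynomial.coeff_mul_X_pow', if_pos le_rfl, Nat.sub_self,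
      Polynomial.coeff_zero_eq_eval_zero, Polynomial.eval_comp]
    congr 1
    simp
  rw [Finset.prod_congr rfl fun b _ => hdiag b]
  have h1 : ∏ b : Fin (n + 1), (gP (n - (b : ℕ))).eval 1
      = ∏ c : Fin (n + 1), (gP (c : ℕ)).eval 1 := by
    refine Fintype.prod_bijective Fin.rev Fin.rev_bijective _ _ fun b => ?_
    have hb : (b : ℕ) ≤ n := Nat.lt_succ_iff.mp b.isLt
    have hval : ((Fin.rev b : Fin (n + 1)) : ℕ) = n - (b : ℕ) := by
      rw [Fin.val_rev]; omega
    rw [hval]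
  rw [h1]
  rw [Fin.prod_univ_eq_prod_range (fun m => (gP m).eval 1) (n + 1),
    Finset.prod_range_succ']
  rw [gP_zero_eval, mul_one]
  rw [Finset.prod_congr rfl fun i _ => gP_eval_one i]
  rw [Finset.prod_pow_eq_pow_sum]

lemma det_Pmat (n : ℕ) : (Pmat n).det = (-1 : ℤ) ^ (∑ i ∈ Finset.range (n + 1), i) := by
  have h : Pmat n = Matrix.of fun i j : Fin (n + 1) =>
      if (i : ℕ) + (j : ℕ) = n + 1 - 1 then (1 : ℤ) else 0 := rfl
  rw [h, det_antidiagOnes]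

lemma det_Ymat (n : ℕ) : (Ymat n).det = (-1 : ℤ) ^ (∑ i ∈ Finset.range (n + 1), i) := by
  have ht : (Ymat n).BlockTriangular OrderDual.toDual := by
    intro i j hij
    have hij' : (i : ℕ) < (j : ℕ) := hij
    simp only [Ymat_apply]
    refine Polynomial.coeff_eq_zero_of_natDegree_lt ?_
    have h2 : ((1 - X : ℤ[X]) ^ (i : ℕ)).natDegree ≤ (i : ℕ) * 1 :=
      le_trans Polynomial.natDegree_pow_le (Nat.mul_le_mul_left _ hdeg1X)
    omega
  rw [Matrix.det_of_lowerTriangular (Ymat n) ht]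
  have hdiag : ∀ t : Fin (n + 1), Ymat n t t = (-1 : ℤ) ^ (t : ℕ) := by
    intro t
    simp only [Ymat_apply]
    have h1 : ((1 - X : ℤ[X])) = Polynomial.C (-1 : ℤ) * (X - Polynomial.C 1) := by
      rw [Polynomial.C_neg, Polynomial.C_1]; ring
    rw [h1, mul_pow, ← map_pow, Polynomial.coeff_C_mul]
    have hm : ((X - Polynomial.C (1 : ℤ)) ^ (t : ℕ)).Monic :=
      (Polynomial.monic_X_sub_C (1 : ℤ)).pow _
    have hd : ((X - Polynomial.C (1 : ℤ)) ^ (t : ℕ)).natDegree = (t : ℕ) := by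
      rw [Polynomial.natDegree_pow, Polynomial.natDegree_X_sub_C, mul_one]
    have hc : ((X - Polynomial.C (1 : ℤ)) ^ (t : ℕ)).coeff (t : ℕ) = 1 := by
      nth_rewrite 2 [← hd]
      exact hm.coeff_natDegree
    rw [hc, mul_one]
  rw [Finset.prod_congr rfl fun t _ => hdiag t]
  rw [Fin.prod_univ_eq_prod_range (fun t => (-1 : ℤ) ^ t) (n + 1),
    Finset.prod_pow_eq_pow_sum]

/-- Theorem: for every `d ≥ 1`, the binomial determinant `D_{d,d}` with row indices
`d−1, d, …, 2d−2` and column indices `0, 2, …, 2(d−1)` equals `2^{(d−1)(d−2)/2}`. -/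
theorem binomDet_d_eval (d : ℕ) (hd : 1 ≤ d) :
    Matrix.det (Matrix.of fun j k : Fin d =>
        ((d - 1 + (j : ℕ)).choose (2 * (k : ℕ)) : ℤ)) = 2 ^ ((d - 1) * (d - 2) / 2) := by
  obtain ⟨n, rfl⟩ : ∃ n, d = n + 1 := ⟨d - 1, by omega⟩
  have hg : (Matrix.of fun j k : Fin (n + 1) =>
      ((n + 1 - 1 + (j : ℕ)).choose (2 * (k : ℕ)) : ℤ)).det = (Bmat n).det := by
    rw [step1, Matrix.det_mul, det_Lmat, one_mul]
  have hBE : (Bmat n).det = (Emat n).det := by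
    have h := congrArg Matrix.det (step2 n)
    rwa [Matrix.det_mul, det_Smat, one_mul] at h
  have hEdet : (Emat n).det = (-1 : ℤ) ^ (∑ i ∈ Finset.range (n + 1), i)
      * 2 ^ (∑ i ∈ Finset.range n, i)
      * (-1 : ℤ) ^ (∑ i ∈ Finset.range (n + 1), i) := by
    rw [step3, Matrix.det_mul, step4, Matrix.det_mul, det_Pmat, det_Wmat', det_Ymat]
  have hsign : (-1 : ℤ) ^ (∑ i ∈ Finset.range (n + 1), i)
      * (-1 : ℤ) ^ (∑ i ∈ Finset.range (n + 1), i) = 1 := by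
    rw [← pow_add]
    exact Even.neg_one_pow ⟨_, rfl⟩
  have hfin : (Matrix.of fun j k : Fin (n + 1) =>
      ((n + 1 - 1 + (j : ℕ)).choose (2 * (k : ℕ)) : ℤ)).det
      = 2 ^ (∑ i ∈ Finset.range n, i) := by
    rw [hg, hBE, hEdet]
    calc (-1 : ℤ) ^ (∑ i ∈ Finset.range (n + 1), i) * 2 ^ (∑ i ∈ Finset.range n, i)
          * (-1 : ℤ) ^ (∑ i ∈ Finset.range (n + 1), i)
        = ((-1 : ℤ) ^ (∑ i ∈ Finset.range (n + 1), i)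
            * (-1 : ℤ) ^ (∑ i ∈ Finset.range (n + 1), i))
          * 2 ^ (∑ i ∈ Finset.range n, i) := by ring
      _ = 2 ^ (∑ i ∈ Finset.range n, i) := by rw [hsign, one_mul]
  rw [hfin]
  congr 1
  have h2 := Finset.sum_range_id_mul_two n
  have h3 : (n + 1 - 1) * (n + 1 - 2) = n * (n - 1) := by
    congr 1 <;> omega
  rw [h3]
  omega
end

section
/- For all integers d ≥ 1 and 0 ≤ i ≤ d, one has D_{d,i} = 2^{d(d−1)/2 − i} · ( C(d,i) + C(d−1,i−1) ), with the convention that C(d−1,−1) = 0 when i = 0. -/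
/-- The binomial determinant `D_{d,i}`: the `d × d` determinant whose `(j,k)` entry
(for `0 ≤ j, k ≤ d−1`) is `C(a_j, 2k)`, where `a_j = d−1+j` if `j < i` and
`a_j = d+j` if `j ≥ i`; i.e. rows indexed by `d−1, d, …, 2d−1` with `d−1+i` omitted,
columns by `0, 2, …, 2(d−1)`. -/
def binomDet (d i : ℕ) : ℤ :=
  Matrix.det (Matrix.of fun j k : Fin d =>
    ((if (j : ℕ) < i then d - 1 + (j : ℕ) else d + (j : ℕ)).choose (2 * (k : ℕ)) : ℤ))

open Polynomial Finset Matrix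

namespace Tst

/-- even binomial polynomial: even part of `(X+1)^s` in compressed variable -/
noncomputable def gpoly (s : ℕ) : ℚ[X] :=
  ∑ m ∈ range (s+1), Polynomial.C ((s.choose (2*m) : ℚ)) * X ^ m

def csum (s t : ℕ) : ℚ := ∑ m ∈ range (s+1), (s.choose (2*m) : ℚ) * (m.choose t : ℚ)

lemma gpoly_coeff (s n : ℕ) : (gpoly s).coeff n = (s.choose (2*n) : ℚ) := by
  rw [gpoly, Polynomial.finset_sum_coeff]
  simp only [Polynomial.coeff_C_mul, Polynomial.coeff_X_pow, mul_ite, mul_one, mul_zero]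
  rw [Finset.sum_ite_eq (range (s+1)) n]
  by_cases h : n ∈ range (s+1)
  · simp [h]
  · simp only [h, if_false]
    simp only [mem_range] at h
    rw [Nat.choose_eq_zero_of_lt (by omega)]
    simp

lemma L_A (j : ℕ) : (X - 1 : ℚ[X])^j
    = ∑ l ∈ range (j+1), Polynomial.C ((j.choose l : ℚ) * (-2)^(j-l)) * (X+1)^l := by
  rw [show (X - 1 : ℚ[X]) = (X + 1) + (-2) by ring, add_pow]
  apply Finset.sum_congr rfl
  intro l _
  have h0 : ((-2 : ℚ[X])) = Polynomial.C (-2 : ℚ) := by rw [map_neg, map_ofNat]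
  rw [h0, ← Polynomial.C_pow, _root_.map_mul, Polynomial.C_eq_natCast]
  ring

lemma L_B (r : ℕ) : (X - 1 : ℚ[X])^r
    = ∑ m ∈ range (r+1), Polynomial.C ((r.choose m : ℚ) * (-1)^(r-m)) * X^m := by
  rw [show (X - 1 : ℚ[X]) = X + (-1) by ring, add_pow]
  apply Finset.sum_congr rfl
  intro m _
  have h1 : ((-1 : ℚ[X])) = Polynomial.C (-1 : ℚ) := by rw [map_neg, Polynomial.C_1]
  rw [h1, ← Polynomial.C_pow, _root_.map_mul, Polynomial.C_eq_natCast]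
  ring

lemma L_C (j : ℕ) : (X^2 - 1 : ℚ[X])^j
    = ∑ m ∈ range (j+1), Polynomial.C ((j.choose m : ℚ) * (-1)^(j-m)) * (X^2)^m := by
  rw [show (X^2 - 1 : ℚ[X]) = X^2 + (-1) by ring, add_pow]
  apply Finset.sum_congr rfl
  intro m _
  have h1 : ((-1 : ℚ[X])) = Polynomial.C (-1 : ℚ) := by rw [map_neg, Polynomial.C_1]
  rw [h1, ← Polynomial.C_pow, _root_.map_mul, Polynomial.C_eq_natCast]
  ring

lemma L_D (m : ℕ) : (X : ℚ[X])^m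
    = ∑ t ∈ range (m+1), Polynomial.C ((m.choose t : ℚ)) * (X-1)^t := by
  conv_lhs => rw [show (X : ℚ[X]) = (X - 1) + 1 by ring, add_pow]
  apply Finset.sum_congr rfl
  intro t _
  rw [Polynomial.C_eq_natCast, one_pow]
  ring

lemma L_E (n : ℕ) : (1 - X : ℚ[X])^n
    = ∑ l ∈ range (n+1), Polynomial.C ((n.choose l : ℚ) * (-1)^l * 2^(n-l)) * (X+1)^l := by
  rw [show (1 - X : ℚ[X]) = (-(X + 1)) + 2 by ring, add_pow]
  apply Finset.sum_congr rfl
  intro l _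
  have h1 : ((2 : ℚ[X])) = Polynomial.C (2 : ℚ) := by rw [map_ofNat]
  have h3 : (-(X + 1) : ℚ[X])^l = Polynomial.C ((-1 : ℚ)^l) * (X+1)^l := by
    rw [neg_pow, map_pow, map_neg, Polynomial.C_1]
  rw [h1, ← Polynomial.C_pow, h3, _root_.map_mul, _root_.map_mul, Polynomial.C_eq_natCast]
  ring

lemma L_F (n : ℕ) : (1 - X^2 : ℚ[X])^n
    = ∑ m ∈ range (n+1), Polynomial.C ((n.choose m : ℚ) * (-1)^m) * X^(2*m) := by
  rw [show (1 - X^2 : ℚ[X]) = (-(X^2)) + 1 by ring, add_pow]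
  apply Finset.sum_congr rfl
  intro m _
  have h3 : (-(X^2) : ℚ[X])^m = Polynomial.C ((-1 : ℚ)^m) * X^(2*m) := by
    rw [neg_pow, pow_mul, map_pow, map_neg, Polynomial.C_1]
  rw [h3, one_pow, _root_.map_mul, Polynomial.C_eq_natCast]
  ring

lemma coeff_Xsub1_pow (r k : ℕ) :
    ((X - 1 : ℚ[X])^r).coeff k = if k ≤ r then (r.choose k : ℚ) * (-1)^(r-k) else 0 := by
  rw [L_B, Polynomial.finset_sum_coeff]
  simp only [Polynomial.coeff_C_mul, Polynomial.coeff_X_pow, mul_ite, mul_one, mul_zero]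
  rw [Finset.sum_ite_eq (range (r+1)) k]
  simp [Nat.lt_succ_iff]

lemma csum_self (s : ℕ) (hs : 1 ≤ s) : csum s s = 0 := by
  rw [csum]
  apply Finset.sum_eq_zero
  intro m hm
  simp only [mem_range] at hm
  rcases lt_or_eq_of_le (Nat.lt_succ_iff.mp hm) with h | h
  · rw [Nat.choose_eq_zero_of_lt h, Nat.cast_zero, mul_zero]
  · subst h
    rw [Nat.choose_eq_zero_of_lt (by omega), Nat.cast_zero, zero_mul]

lemma gpoly_expand (s : ℕ) (hs : 1 ≤ s) :
    gpoly s = ∑ t ∈ range s, Polynomial.C (csum s t) * (X - 1 : ℚ[X])^t := by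
  have step1 : gpoly s
      = ∑ m ∈ range (s+1), ∑ t ∈ range (s+1),
          Polynomial.C ((s.choose (2*m) : ℚ) * (m.choose t : ℚ)) * (X-1)^t := by
    rw [gpoly]
    apply Finset.sum_congr rfl
    intro m hm
    simp only [mem_range] at hm
    rw [L_D, Finset.mul_sum]
    rw [← Finset.sum_subset (Finset.range_subset_range.2 (by omega) : range (m+1) ⊆ range (s+1))]
    · apply Finset.sum_congr rfl
      intro t _
      rw [← mul_assoc, ← _root_.map_mul]
    · intro t _ ht
      simp only [mem_range] at ht
      rw [Nat.choose_eq_zero_of_lt (show m < t by omega)]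
      simp
  rw [step1, Finset.sum_comm]
  have step2 : ∀ t ∈ range (s+1),
      (∑ m ∈ range (s+1), Polynomial.C ((s.choose (2*m) : ℚ) * (m.choose t : ℚ)) * (X-1)^t)
      = Polynomial.C (csum s t) * (X - 1 : ℚ[X])^t := by
    intro t _
    rw [← Finset.sum_mul, csum]
    congr 1
    rw [← map_sum]
  rw [Finset.sum_congr rfl step2, Finset.sum_range_succ, csum_self s hs]
  simp

/-- sum of a function over even binomial coefficients -/
lemma pair_sum {M : Type*} [AddCommMonoid M] (g : ℕ → M) (n : ℕ) :
    ∑ i ∈ range (2*n), g i = ∑ t ∈ range n, (g (2*t) + g (2*t+1)) := by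
  induction n with
  | zero => simp
  | succ n ih =>
    have h2 : 2*(n+1) = (2*n+1)+1 := by omega
    rw [h2, sum_range_succ, sum_range_succ, ih, sum_range_succ]
    abel

lemma evensum (s : ℕ) (hs : 1 ≤ s) :
    ∑ m ∈ range (s+1), ((s.choose (2*m)) : ℚ) = 2^(s-1) := by
  have ha : ∑ i ∈ range (2*(s+1)), ((s.choose i : ℚ)) = 2^s := by
    rw [← Finset.sum_subset (Finset.range_subset_range.2 (by omega) :
        range (s+1) ⊆ range (2*(s+1)))]
    · have := Nat.sum_range_choose s
      have := congrArg (fun z : ℕ => (z : ℚ)) this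
      push_cast at this
      exact this
    · intro x _ hx
      simp only [mem_range] at hx
      rw [Nat.choose_eq_zero_of_lt (by omega)]
      simp
  have hb : ∑ i ∈ range (2*(s+1)), ((-1:ℚ))^i * (s.choose i : ℚ) = 0 := by
    rw [← Finset.sum_subset (Finset.range_subset_range.2 (by omega) :
        range (s+1) ⊆ range (2*(s+1)))]
    · have := Int.alternating_sum_range_choose_of_ne (show s ≠ 0 by omega)
      have := congrArg (fun z : ℤ => (z : ℚ)) this
      push_cast at this
      simpa using this
    · intro x _ hx
      simp only [mem_range] at hx
      rw [Nat.choose_eq_zero_of_lt (by omega)]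
      simp
  rw [pair_sum] at ha hb
  have hb' : ∑ t ∈ range (s+1), (((s.choose (2*t) : ℚ)) - (s.choose (2*t+1) : ℚ)) = 0 := by
    rw [← hb]
    apply Finset.sum_congr rfl
    intro t _
    have h1 : ((-1:ℚ))^(2*t) = 1 := by
      rw [pow_mul]; norm_num
    have h2 : ((-1:ℚ))^(2*t+1) = -1 := by
      rw [pow_succ, h1]; ring
    rw [h1, h2]; ring
  have hsum : (2:ℚ) * ∑ m ∈ range (s+1), ((s.choose (2*m)) : ℚ) = 2^s := by
    have : (2:ℚ) * ∑ m ∈ range (s+1), ((s.choose (2*m)) : ℚ)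
        = (∑ t ∈ range (s+1), (((s.choose (2*t):ℚ)) + (s.choose (2*t+1) : ℚ)))
          + ∑ t ∈ range (s+1), (((s.choose (2*t) : ℚ)) - (s.choose (2*t+1) : ℚ)) := by
      rw [Finset.mul_sum, ← Finset.sum_add_distrib]
      apply Finset.sum_congr rfl
      intro t _; ring
    rw [this, ha, hb', add_zero]
  have : (2:ℚ)^s = 2 * 2^(s-1) := by
    obtain ⟨s', rfl⟩ : ∃ s', s = s' + 1 := ⟨s - 1, by omega⟩
    simp [pow_succ]; ring
  rw [this] at hsum
  linarith


lemma sum_if_le {M : Type*} [AddCommMonoid M] (n m : ℕ) (h : m < n) (f : ℕ → M) :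
    ∑ l ∈ range n, (if l ≤ m then f l else 0) = ∑ l ∈ range (m+1), f l := by
  rw [← Finset.sum_subset (Finset.range_subset_range.2 (by omega) : range (m+1) ⊆ range n)]
  · apply Finset.sum_congr rfl
    intro l hl
    simp only [mem_range] at hl
    rw [if_pos (by omega)]
  · intro l _ hl
    simp only [mem_range] at hl
    rw [if_neg (by omega)]

lemma sum_if_ge {M : Type*} [AddCommMonoid M] (n m : ℕ) (h : m ≤ n) (f : ℕ → M) :
    ∑ r ∈ range n, (if m ≤ r then f r else 0) = ∑ t ∈ range (n-m), f (m+t) := by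
  rw [Finset.range_eq_Ico, ← Finset.sum_Ico_consecutive _ (Nat.zero_le m) h]
  have h1 : ∑ r ∈ Finset.Ico 0 m, (if m ≤ r then f r else 0) = 0 := by
    apply Finset.sum_eq_zero
    intro r hr
    simp only [Finset.mem_Ico] at hr
    rw [if_neg (by omega)]
  have h2 : ∑ r ∈ Finset.Ico m n, (if m ≤ r then f r else 0) = ∑ r ∈ Finset.Ico m n, f r := by
    apply Finset.sum_congr rfl
    intro r hr
    simp only [Finset.mem_Ico] at hr
    rw [if_pos hr.1]
  rw [h1, h2, zero_add, Finset.sum_Ico_eq_sum_range]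

/-- row-transform matrix -/
def Gm (e : ℕ) : Matrix (Fin (e+1)) (Fin (e+1)) ℚ :=
  Matrix.of fun j l => if (l:ℕ) ≤ (j:ℕ) then ((j:ℕ).choose (l:ℕ) : ℚ) * (-2)^((j:ℕ)-(l:ℕ)) else 0

/-- the anchor matrix, `C(d+j, 2k)` -/
def A0 (e : ℕ) : Matrix (Fin (e+1)) (Fin (e+1)) ℚ :=
  Matrix.of fun j k => ((e+1+(j:ℕ)).choose (2*(k:ℕ)) : ℚ)

def EE (e : ℕ) : Matrix (Fin (e+1)) (Fin (e+1)) ℚ :=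
  Matrix.of fun j r => if (j:ℕ) ≤ (r:ℕ) then csum (e+1-(j:ℕ)) ((r:ℕ)-(j:ℕ)) else 0

def FF (e : ℕ) : Matrix (Fin (e+1)) (Fin (e+1)) ℚ :=
  Matrix.of fun r k => if (k:ℕ) ≤ (r:ℕ) then ((r:ℕ).choose (k:ℕ) : ℚ) * (-1)^((r:ℕ)-(k:ℕ)) else 0

lemma GA_entry (e : ℕ) (j k : Fin (e+1)) :
    (Gm e * A0 e) j k = ((X-1:ℚ[X])^(j:ℕ) * (X+1)^(e+1)).coeff (2*(k:ℕ)) := by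
  rw [Matrix.mul_apply]
  have step1 : ∀ l : Fin (e+1), Gm e j l * A0 e l k
      = (Polynomial.C (Gm e j l) * (X+1:ℚ[X])^(e+1+(l:ℕ))).coeff (2*(k:ℕ)) := by
    intro l
    rw [Polynomial.coeff_C_mul, Polynomial.coeff_X_add_one_pow]
    rfl
  rw [Finset.sum_congr rfl (fun l _ => step1 l), ← Polynomial.finset_sum_coeff]
  congr 1
  simp only [Gm, Matrix.of_apply]
  rw [Fin.sum_univ_eq_sum_range (fun l =>
    Polynomial.C (if l ≤ (j:ℕ) then ((j:ℕ).choose l : ℚ) * (-2)^((j:ℕ)-l) else 0)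
      * (X+1:ℚ[X])^(e+1+l))]
  simp only [apply_ite Polynomial.C, map_zero, ite_mul, zero_mul]
  rw [sum_if_le (e+1) (j:ℕ) j.isLt, L_A, Finset.sum_mul]
  apply Finset.sum_congr rfl
  intro l _
  rw [mul_assoc, ← pow_add, Nat.add_comm (l:ℕ) (e+1)]

lemma EF_entry (e : ℕ) (j k : Fin (e+1)) :
    (EE e * FF e) j k = ((X-1:ℚ[X])^(j:ℕ) * gpoly (e+1-(j:ℕ))).coeff (k:ℕ) := by
  rw [Matrix.mul_apply]
  have step1 : ∀ r : Fin (e+1), EE e j r * FF e r k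
      = (Polynomial.C (EE e j r) * (X-1:ℚ[X])^(r:ℕ)).coeff (k:ℕ) := by
    intro r
    rw [Polynomial.coeff_C_mul, coeff_Xsub1_pow]
    rfl
  rw [Finset.sum_congr rfl (fun r _ => step1 r), ← Polynomial.finset_sum_coeff]
  congr 1
  simp only [EE, Matrix.of_apply]
  rw [Fin.sum_univ_eq_sum_range (fun r =>
    Polynomial.C (if (j:ℕ) ≤ r then csum (e+1-(j:ℕ)) (r-(j:ℕ)) else 0) * (X-1:ℚ[X])^r)]
  simp only [apply_ite Polynomial.C, map_zero, ite_mul, zero_mul]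
  rw [sum_if_ge (e+1) (j:ℕ) (by omega) (fun r => Polynomial.C (csum (e+1-(j:ℕ)) (r-(j:ℕ)))
    * (X-1:ℚ[X])^r)]
  rw [gpoly_expand (e+1-(j:ℕ)) (by omega), Finset.mul_sum]
  apply Finset.sum_congr rfl
  intro t _
  rw [Nat.add_sub_cancel_left, pow_add]
  ring

lemma even_part (j s k : ℕ) :
    ((X-1:ℚ[X])^j * (X+1)^(j+s)).coeff (2*k) = ((X-1:ℚ[X])^j * gpoly s).coeff k := by
  have key : (X-1:ℚ[X])^j * (X+1)^(j+s) = (X^2-1)^j * (X+1)^s := by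
    rw [pow_add, show (X^2-1:ℚ[X]) = (X-1)*(X+1) by ring, mul_pow]
    ring
  rw [key, L_C, L_B, Finset.sum_mul, Finset.sum_mul, Polynomial.finset_sum_coeff,
    Polynomial.finset_sum_coeff]
  apply Finset.sum_congr rfl
  intro m _
  rw [← pow_mul, mul_assoc, mul_assoc, Polynomial.coeff_C_mul, Polynomial.coeff_C_mul,
    Polynomial.coeff_X_pow_mul', Polynomial.coeff_X_pow_mul', Polynomial.coeff_X_add_one_pow,
    gpoly_coeff]
  congr 1
  by_cases h : m ≤ k
  · rw [if_pos (by omega), if_pos h]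
    congr 2
    omega
  · rw [if_neg (by omega), if_neg h]

lemma det_Gm (e : ℕ) : (Gm e).det = 1 := by
  have h : (Gm e).BlockTriangular OrderDual.toDual := by
    intro i j hij
    have : (i:ℕ) < (j:ℕ) := hij
    exact if_neg (by omega)
  rw [Matrix.det_of_lowerTriangular _ h]
  apply Finset.prod_eq_one
  intro i _
  show (if (i:ℕ) ≤ (i:ℕ) then ((i:ℕ).choose (i:ℕ) : ℚ) * (-2)^((i:ℕ)-(i:ℕ)) else 0) = 1
  rw [if_pos le_rfl, Nat.choose_self, Nat.sub_self]
  norm_num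

lemma det_FF (e : ℕ) : (FF e).det = 1 := by
  have h : (FF e).BlockTriangular OrderDual.toDual := by
    intro i j hij
    have : (i:ℕ) < (j:ℕ) := hij
    exact if_neg (by omega)
  rw [Matrix.det_of_lowerTriangular _ h]
  apply Finset.prod_eq_one
  intro i _
  show (if (i:ℕ) ≤ (i:ℕ) then ((i:ℕ).choose (i:ℕ) : ℚ) * (-1)^((i:ℕ)-(i:ℕ)) else 0) = 1
  rw [if_pos le_rfl, Nat.choose_self, Nat.sub_self]
  norm_num

lemma det_EE (e : ℕ) : (EE e).det = 2^(e*(e+1)/2) := by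
  have h : (EE e).BlockTriangular id := by
    intro i j hij
    have : (j:ℕ) < (i:ℕ) := hij
    exact if_neg (by omega)
  rw [Matrix.det_of_upperTriangular h]
  have hdiag : ∀ i : Fin (e+1), (EE e) i i = 2^(e-(i:ℕ)) := by
    intro i
    show (if (i:ℕ) ≤ (i:ℕ) then csum (e+1-(i:ℕ)) ((i:ℕ)-(i:ℕ)) else 0) = 2^(e-(i:ℕ))
    rw [if_pos le_rfl, Nat.sub_self, csum]
    have : ∑ m ∈ range (e+1-(i:ℕ)+1), ((e+1-(i:ℕ)).choose (2*m) : ℚ) * ((m.choose 0 : ℚ))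
        = ∑ m ∈ range (e+1-(i:ℕ)+1), ((e+1-(i:ℕ)).choose (2*m) : ℚ) := by
      apply Finset.sum_congr rfl
      intro m _
      rw [Nat.choose_zero_right]
      norm_num
    rw [this, evensum (e+1-(i:ℕ)) (by omega)]
    congr 1
    omega
  rw [Finset.prod_congr rfl (fun i _ => hdiag i), Finset.prod_pow_eq_pow_sum]
  congr 1
  rw [Fin.sum_univ_eq_sum_range (fun j => e - j)]
  show ∑ j ∈ range (e+1), (e - j) = e*(e+1)/2
  have := Finset.sum_range_reflect (fun j => j) (e+1)
  have h2 : ∑ j ∈ range (e+1), (e - j) = ∑ j ∈ range (e+1), j := by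
    rw [← this]
    apply Finset.sum_congr rfl
    intro j hj
    simp only [mem_range] at hj
    omega
  rw [h2, Finset.sum_range_id (e+1)]
  congr 1
  simp [Nat.mul_comm]

lemma det_A0 (e : ℕ) : (A0 e).det = 2^(e*(e+1)/2) := by
  have key : Gm e * A0 e = EE e * FF e := by
    ext j k
    rw [GA_entry, EF_entry]
    have : e + 1 = (j:ℕ) + (e+1-(j:ℕ)) := by omega
    rw [show ((X-1:ℚ[X])^(j:ℕ) * (X+1)^(e+1)) = ((X-1:ℚ[X])^(j:ℕ) * (X+1)^((j:ℕ)+(e+1-(j:ℕ)))) by rw [← this]]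
    exact even_part (j:ℕ) (e+1-(j:ℕ)) (k:ℕ)
  have := congrArg Matrix.det key
  rw [Matrix.det_mul, Matrix.det_mul, det_Gm, det_FF, det_EE, one_mul, mul_one] at this
  exact this

lemma oddQ (e n : ℕ) (hn : n % 2 = 1) : ((1 - X^2 : ℚ[X])^e).coeff n = 0 := by
  rw [L_F, Polynomial.finset_sum_coeff]
  apply Finset.sum_eq_zero
  intro m _
  rw [Polynomial.coeff_C_mul, Polynomial.coeff_X_pow, if_neg (by omega), mul_zero]

lemma kernel (e k : ℕ) :
    ∑ i ∈ range (e+2), ((-1:ℚ)^i * 2^(e+1-i) *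
      (((e+1).choose i : ℚ) + if i = 0 then 0 else (e.choose (i-1) : ℚ)))
      * ((e+i).choose (2*k) : ℚ) = 0 := by
  have hT : ∑ i ∈ range (e+2), Polynomial.C ((-1:ℚ)^i * 2^(e+1-i) *
        (((e+1).choose i : ℚ) + if i = 0 then 0 else (e.choose (i-1) : ℚ)))
        * (X+1:ℚ[X])^(e+i)
      = Polynomial.C (-2:ℚ) * (X * (1-X^2:ℚ[X])^e) := by
    have split : ∀ i ∈ range (e+2),
        Polynomial.C ((-1:ℚ)^i * 2^(e+1-i) *
          (((e+1).choose i : ℚ) + if i = 0 then 0 else (e.choose (i-1) : ℚ)))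
          * (X+1:ℚ[X])^(e+i)
        = Polynomial.C ((-1:ℚ)^i * 2^(e+1-i) * ((e+1).choose i : ℚ)) * (X+1:ℚ[X])^(e+i)
          + Polynomial.C ((-1:ℚ)^i * 2^(e+1-i) *
              (if i = 0 then 0 else (e.choose (i-1) : ℚ))) * (X+1:ℚ[X])^(e+i) := by
      intro i _
      rw [mul_add, map_add, add_mul]
    rw [Finset.sum_congr rfl split, Finset.sum_add_distrib]
    have hT1 : ∑ i ∈ range (e+2),
        Polynomial.C ((-1:ℚ)^i * 2^(e+1-i) * ((e+1).choose i : ℚ)) * (X+1:ℚ[X])^(e+i)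
        = (X+1:ℚ[X])^e * (1-X)^(e+1) := by
      rw [L_E (e+1), Finset.mul_sum]
      apply Finset.sum_congr rfl
      intro l _
      have hc : (-1:ℚ)^l * 2^(e+1-l) * ((e+1).choose l : ℚ)
          = ((e+1).choose l : ℚ) * (-1)^l * 2^(e+1-l) := by ring
      rw [hc, pow_add]
      ring
    have hT2 : ∑ i ∈ range (e+2),
        Polynomial.C ((-1:ℚ)^i * 2^(e+1-i) *
          (if i = 0 then 0 else (e.choose (i-1) : ℚ))) * (X+1:ℚ[X])^(e+i)
        = -((X+1:ℚ[X])^(e+1) * (1-X)^e) := by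
      rw [Finset.sum_range_succ']
      have h0 : Polynomial.C ((-1:ℚ)^0 * 2^(e+1-0) *
          (if 0 = 0 then 0 else (e.choose (0-1) : ℚ))) * (X+1:ℚ[X])^(e+0) = 0 := by
        rw [if_pos rfl, mul_zero, map_zero, zero_mul]
      rw [h0, add_zero, L_E e, Finset.mul_sum, ← Finset.sum_neg_distrib]
      apply Finset.sum_congr rfl
      intro l _
      rw [if_neg (Nat.succ_ne_zero l)]
      have h1 : l + 1 - 1 = l := rfl
      have h2 : e + 1 - (l + 1) = e - l := by omega
      have h3 : e + (l + 1) = (e+1) + l := by omega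
      rw [h1, h2, h3]
      have hc : (-1:ℚ)^(l+1) * 2^(e-l) * (e.choose l : ℚ)
          = -((e.choose l : ℚ) * (-1)^l * 2^(e-l)) := by
        rw [pow_succ]; ring
      rw [hc, map_neg, pow_add]
      ring
    rw [hT1, hT2]
    have hC2 : (Polynomial.C (-2:ℚ)) = -2 := by rw [map_neg, map_ofNat]
    have hfac : (1-X^2:ℚ[X])^e = (X+1)^e * (1-X)^e := by
      rw [← mul_pow]
      congr 1
      ring
    rw [hC2, hfac, pow_succ (1-X:ℚ[X]) e, pow_succ (X+1:ℚ[X]) e]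
    ring
  have hcoeff := congrArg (fun p : ℚ[X] => p.coeff (2*k)) hT
  simp only [Polynomial.finset_sum_coeff, Polynomial.coeff_C_mul,
    Polynomial.coeff_X_add_one_pow] at hcoeff
  rw [hcoeff]
  rcases Nat.eq_zero_or_pos k with hk | hk
  · subst hk
    rw [Nat.mul_zero, Polynomial.mul_coeff_zero, Polynomial.coeff_X_zero]
    ring
  · obtain ⟨k', rfl⟩ : ∃ k', k = k' + 1 := ⟨k - 1, by omega⟩
    have h2k : 2*(k'+1) = (2*k'+1)+1 := by omega
    rw [h2k, Polynomial.coeff_X_mul, oddQ e (2*k'+1) (by omega), mul_zero]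

lemma succAbove_val (e : ℕ) (i : Fin (e+2)) (j : Fin (e+1)) :
    ((i.succAbove j : Fin (e+2)) : ℕ) = if (j:ℕ) < (i:ℕ) then (j:ℕ) else (j:ℕ)+1 := by
  rw [Fin.succAbove]
  by_cases h : (j:ℕ) < (i:ℕ)
  · rw [if_pos h, if_pos (show Fin.castSucc j < i by rwa [Fin.lt_def, Fin.coe_castSucc])]
    rfl
  · rw [if_neg h, if_neg (show ¬ Fin.castSucc j < i by rwa [Fin.lt_def, Fin.coe_castSucc])]
    rfl

lemma binomDet_cast (e : ℕ) (i : Fin (e+2)) :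
    (binomDet (e+1) (i:ℕ) : ℚ) =
      (Matrix.of fun j k : Fin (e+1) =>
        ((e + ((i.succAbove j : Fin (e+2)) : ℕ)).choose (2*(k:ℕ)) : ℚ)).det := by
  have hmap := RingHom.map_det (Int.castRingHom ℚ) (Matrix.of fun j k : Fin (e+1) =>
      ((if (j:ℕ) < ((i:ℕ)) then (e+1)-1+(j:ℕ) else (e+1)+(j:ℕ)).choose (2*(k:ℕ)) : ℤ))
  simp only [Int.coe_castRingHom] at hmap
  show ((Matrix.det (Matrix.of fun j k : Fin (e+1) =>
      ((if (j:ℕ) < ((i:ℕ)) then (e+1)-1+(j:ℕ) else (e+1)+(j:ℕ)).choose (2*(k:ℕ)) : ℤ)) : ℤ) : ℚ) = _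
  rw [hmap]
  congr 1
  ext j k
  simp only [RingHom.mapMatrix_apply, Matrix.map_apply, Matrix.of_apply,
    Int.coe_castRingHom, Int.cast_natCast]
  congr 2
  rw [succAbove_val]
  by_cases h : (j:ℕ) < (i:ℕ)
  · rw [if_pos h, if_pos h]
    omega
  · rw [if_neg h, if_neg h]
    omega

lemma binomDet_zero (e : ℕ) : (binomDet (e+1) 0 : ℚ) = 2^(e*(e+1)/2) := by
  have hmap := RingHom.map_det (Int.castRingHom ℚ) (Matrix.of fun j k : Fin (e+1) =>
      ((if (j:ℕ) < 0 then (e+1)-1+(j:ℕ) else (e+1)+(j:ℕ)).choose (2*(k:ℕ)) : ℤ))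
  simp only [Int.coe_castRingHom] at hmap
  show ((Matrix.det (Matrix.of fun j k : Fin (e+1) =>
      ((if (j:ℕ) < 0 then (e+1)-1+(j:ℕ) else (e+1)+(j:ℕ)).choose (2*(k:ℕ)) : ℤ)) : ℤ) : ℚ) = _
  rw [hmap, ← det_A0 e]
  congr 1

lemma cramer_rel (e : ℕ) (k : Fin (e+1)) :
    ∑ i : Fin (e+2), (-1:ℚ)^(i:ℕ) * (binomDet (e+1) (i:ℕ) : ℚ)
      * ((e+(i:ℕ)).choose (2*(k:ℕ)) : ℚ) = 0 := by
  set B : Matrix (Fin (e+2)) (Fin (e+2)) ℚ :=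
    Matrix.of (fun a c => (((e+(a:ℕ)).choose
      (2 * (if (c:ℕ) < e+1 then (c:ℕ) else (k:ℕ)))) : ℚ)) with hB
  have hcol : ∀ r, B r (Fin.castSucc k) = B r (Fin.last (e+1)) := by
    intro r
    simp only [hB, Matrix.of_apply, Fin.coe_castSucc, Fin.val_last]
    rw [if_pos k.isLt, if_neg (lt_irrefl (e+1))]
  have hdet0 : B.det = 0 :=
    Matrix.det_zero_of_column_eq (Fin.castSucc_lt_last k).ne hcol
  have hexp := Matrix.det_succ_column B (Fin.last (e+1))
  rw [hdet0] at hexp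
  have hsub : ∀ i : Fin (e+2),
      (B.submatrix i.succAbove (Fin.last (e+1)).succAbove).det
        = (binomDet (e+1) (i:ℕ) : ℚ) := by
    intro i
    rw [binomDet_cast]
    congr 1
    ext j k'
    simp only [Matrix.submatrix_apply, hB, Matrix.of_apply, Fin.succAbove_last,
      Fin.coe_castSucc]
    rw [if_pos k'.isLt]
  have hlast : ∀ i : Fin (e+2), B i (Fin.last (e+1))
      = ((e+(i:ℕ)).choose (2*(k:ℕ)) : ℚ) := by
    intro i
    simp only [hB, Matrix.of_apply, Fin.val_last]
    rw [if_neg (lt_irrefl (e+1))]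
  have key : ∑ i : Fin (e+2), (-1:ℚ)^((i:ℕ)+(e+1)) * ((e+(i:ℕ)).choose (2*(k:ℕ)) : ℚ)
      * (binomDet (e+1) (i:ℕ) : ℚ) = 0 := by
    calc ∑ i : Fin (e+2), (-1:ℚ)^((i:ℕ)+(e+1)) * ((e+(i:ℕ)).choose (2*(k:ℕ)) : ℚ)
        * (binomDet (e+1) (i:ℕ) : ℚ)
        = ∑ i : Fin (e+2), (-1:ℚ)^((i:ℕ)+((Fin.last (e+1)):ℕ)) * B i (Fin.last (e+1))
          * (B.submatrix i.succAbove (Fin.last (e+1)).succAbove).det := by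
          apply Finset.sum_congr rfl
          intro i _
          rw [hsub i, hlast i, Fin.val_last]
      _ = 0 := hexp.symm
  have final : ∑ i : Fin (e+2), (-1:ℚ)^(i:ℕ) * (binomDet (e+1) (i:ℕ) : ℚ)
      * ((e+(i:ℕ)).choose (2*(k:ℕ)) : ℚ)
      = (-1:ℚ)^(e+1) * ∑ i : Fin (e+2), (-1:ℚ)^((i:ℕ)+(e+1))
        * ((e+(i:ℕ)).choose (2*(k:ℕ)) : ℚ) * (binomDet (e+1) (i:ℕ) : ℚ) := by
    rw [Finset.mul_sum]
    apply Finset.sum_congr rfl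
    intro i _
    have hsq : (-1:ℚ)^(e+1) * (-1:ℚ)^(e+1) = 1 := by
      rw [← pow_add]
      exact Even.neg_one_pow ⟨e+1, by ring⟩
    have hsq' : (-1:ℚ)^(e*2) = 1 := by
      rw [mul_comm e 2, pow_mul]
      norm_num
    rw [pow_add (-1:ℚ) (i:ℕ) (e+1)]
    linear_combination (-((-1:ℚ)^(i:ℕ) * ((e+(i:ℕ)).choose (2*(k:ℕ)) : ℚ)
      * (binomDet (e+1) (i:ℕ) : ℚ))) * hsq'
  rw [final, key, mul_zero]

lemma glue (e : ℕ) (i : Fin (e+2)) :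
    (2:ℚ)^(e+1) * (binomDet (e+1) (i:ℕ) : ℚ)
      = 2^(e*(e+1)/2) * 2^(e+1-(i:ℕ)) *
        (((e+1).choose (i:ℕ) : ℚ) + if (i:ℕ) = 0 then 0 else (e.choose ((i:ℕ)-1) : ℚ)) := by
  set z : Fin (e+2) → ℚ := fun a =>
    2^(e+1) * ((-1:ℚ)^(a:ℕ) * (binomDet (e+1) (a:ℕ) : ℚ))
    - 2^(e*(e+1)/2) * ((-1:ℚ)^(a:ℕ) * 2^(e+1-(a:ℕ)) *
        (((e+1).choose (a:ℕ) : ℚ) + if (a:ℕ) = 0 then 0 else (e.choose ((a:ℕ)-1) : ℚ))) with hz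
  have hker_v : ∀ kk : Fin (e+1), ∑ a : Fin (e+2),
      ((-1:ℚ)^(a:ℕ) * 2^(e+1-(a:ℕ)) *
        (((e+1).choose (a:ℕ) : ℚ) + if (a:ℕ) = 0 then 0 else (e.choose ((a:ℕ)-1) : ℚ)))
        * ((e+(a:ℕ)).choose (2*(kk:ℕ)) : ℚ) = 0 := by
    intro kk
    rw [Fin.sum_univ_eq_sum_range (fun n => ((-1:ℚ)^n * 2^(e+1-n) *
        (((e+1).choose n : ℚ) + if n = 0 then 0 else (e.choose (n-1) : ℚ)))
        * ((e+n).choose (2*(kk:ℕ)) : ℚ))]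
    exact kernel e (kk:ℕ)
  have hzk : ∀ kk : Fin (e+1), ∑ a : Fin (e+2), z a * ((e+(a:ℕ)).choose (2*(kk:ℕ)) : ℚ) = 0 := by
    intro kk
    have expand : ∀ a : Fin (e+2), z a * ((e+(a:ℕ)).choose (2*(kk:ℕ)) : ℚ)
        = 2^(e+1) * ((-1:ℚ)^(a:ℕ) * (binomDet (e+1) (a:ℕ) : ℚ)
            * ((e+(a:ℕ)).choose (2*(kk:ℕ)) : ℚ))
          - 2^(e*(e+1)/2) * (((-1:ℚ)^(a:ℕ) * 2^(e+1-(a:ℕ)) *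
            (((e+1).choose (a:ℕ) : ℚ) + if (a:ℕ) = 0 then 0 else (e.choose ((a:ℕ)-1) : ℚ)))
            * ((e+(a:ℕ)).choose (2*(kk:ℕ)) : ℚ)) := by
      intro a
      simp only [hz]
      ring
    rw [Finset.sum_congr rfl (fun a _ => expand a), Finset.sum_sub_distrib,
      ← Finset.mul_sum, ← Finset.mul_sum, cramer_rel e kk, hker_v kk, mul_zero, mul_zero,
      sub_zero]
  have hz0 : z 0 = 0 := by
    simp only [hz, Fin.val_zero]
    rw [binomDet_zero]
    norm_num
    ring
  have hvm : (fun j : Fin (e+1) => z j.succ) ᵥ* (A0 e) = 0 := by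
    funext kk
    show ∑ j : Fin (e+1), z j.succ * A0 e j kk = 0
    have h1 := hzk kk
    rw [Fin.sum_univ_succ, hz0, zero_mul, zero_add] at h1
    have h2 : ∀ j : Fin (e+1), z j.succ * A0 e j kk
        = z j.succ * ((e+((j.succ : Fin (e+2)):ℕ)).choose (2*(kk:ℕ)) : ℚ) := by
      intro j
      simp only [A0, Matrix.of_apply, Fin.val_succ]
      rw [show e+((j:ℕ)+1) = e+1+(j:ℕ) from by omega]
    rw [Finset.sum_congr rfl (fun j _ => h2 j)]
    exact h1
  have hzs : (fun j : Fin (e+1) => z j.succ) = 0 :=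
    Matrix.eq_zero_of_vecMul_eq_zero (by rw [det_A0]; positivity) hvm
  have hzi : z i = 0 := by
    refine Fin.cases hz0 (fun j => ?_) i
    exact congrFun hzs j
  simp only [hz] at hzi
  have hne : ((-1:ℚ)^(i:ℕ)) ≠ 0 := by
    apply pow_ne_zero
    norm_num
  apply mul_left_cancel₀ hne
  linear_combination hzi

lemma glue' (e i : ℕ) (h : i ≤ e+1) :
    (2:ℚ)^(e+1) * (binomDet (e+1) i : ℚ)
      = 2^(e*(e+1)/2) * 2^(e+1-i) *
        (((e+1).choose i : ℚ) + if i = 0 then 0 else (e.choose (i-1) : ℚ)) :=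
  glue e ⟨i, by omega⟩

end Tst

/-- Theorem: for all `d ≥ 1` and `0 ≤ i ≤ d`,
`D_{d,i} = 2^{d(d−1)/2 − i} · (C(d,i) + C(d−1,i−1))`, with the convention that
`C(d−1,−1) = 0` when `i = 0`. The power of `2` is interpreted in `ℚ` since the
exponent may be negative. -/
theorem binomDet_normalized_formula (d i : ℕ) (hd : 1 ≤ d) (hi : i ≤ d) :
    (binomDet d i : ℚ) =
      (2 : ℚ) ^ (((d * (d - 1) / 2 : ℕ) : ℤ) - (i : ℤ)) *
        ((d.choose i : ℚ) + if i = 0 then 0 else ((d - 1).choose (i - 1) : ℚ)) := by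
  obtain ⟨e, rfl⟩ : ∃ e, d = e + 1 := ⟨d - 1, by omega⟩
  have hg := Tst.glue' e i hi
  have hd1 : (e+1) - 1 = e := by omega
  rw [hd1]
  have h2z : (2:ℚ) ^ ((((e+1) * e / 2 : ℕ) : ℤ) - (i:ℤ)) = 2^((e+1)*e/2) / 2^i := by
    rw [zpow_sub₀ (by norm_num : (2:ℚ) ≠ 0), zpow_natCast, zpow_natCast]
  rw [h2z, show (e+1)*e/2 = e*(e+1)/2 from by rw [Nat.mul_comm]]
  rw [div_mul_eq_mul_div, eq_div_iff (by positivity : (2:ℚ)^i ≠ 0)]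
  have hpow : (2:ℚ)^(e+1-i) * 2^i = 2^(e+1) := by
    rw [← pow_add]
    congr 1
    omega
  apply mul_left_cancel₀ (show (2:ℚ)^(e+1) ≠ 0 by positivity)
  linear_combination ((2:ℚ)^i) * hg
    + ((2:ℚ)^(e*(e+1)/2) * (((e+1).choose i : ℚ)
        + if i = 0 then 0 else (e.choose (i-1) : ℚ))) * hpow
end

section
/- For all integers d ≥ 2 and 1 ≤ i ≤ d−1, the binomial determinants satisfy the Pascal-type recurrence 2 · D_{d,i} = 2^{d−1} · D_{d−1,i−1} + 2^{d} · D_{d−1,i}; equivalently, the normalized determinants D'_{d,i} = D_{d,i} / 2^{d(d−1)/2 − i} satisfy D'_{d,i} = D'_{d−1,i−1} + D'_{d−1,i}. -/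
open Polynomial Finset

/-- weights: `W s j = [y^j] (1+y)(2+y)^(s-1)` -/
def Wt (s j : ℕ) : ℤ :=
  2 ^ (s - 1 - j) * ((s - 1).choose j : ℤ) +
    if j = 0 then 0 else 2 ^ (s - j) * ((s - 1).choose (j - 1) : ℤ)

lemma Wt_zero (s : ℕ) : Wt s 0 = 2 ^ (s - 1) := by
  simp [Wt]

lemma Wt_pos {s j : ℕ} (hj : j ≤ s) : 0 < Wt s j := by
  unfold Wt
  rcases Nat.eq_zero_or_pos j with h | h
  · subst h
    simp only [if_pos rfl, add_zero, Nat.choose_zero_right, Nat.cast_one, mul_one, Nat.sub_zero]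
    positivity
  · rw [if_neg (by omega)]
    have h1 : (0:ℤ) ≤ 2 ^ (s - 1 - j) * ((s - 1).choose j : ℤ) := by positivity
    have h2 : (0:ℤ) < 2 ^ (s - j) * ((s - 1).choose (j - 1) : ℤ) := by
      apply mul_pos (by positivity)
      exact_mod_cast Nat.choose_pos (by omega)
    linarith

/-- binomial expansion `(1-X)^n = ∑ (-1)^t 2^(n-t) C(n,t) (1+X)^t` -/
lemma binom_expand (n : ℕ) :
    ((1 - X : Polynomial ℤ)) ^ n
      = ∑ t ∈ range (n + 1), C ((-1) ^ t * 2 ^ (n - t) * ((n.choose t : ℤ))) * (1 + X) ^ t := by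
  have h := add_pow (-(1 + X) : Polynomial ℤ) 2 n
  have hb : (-(1 + X) : Polynomial ℤ) + 2 = 1 - X := by ring
  rw [hb] at h
  rw [h]
  refine Finset.sum_congr rfl fun t ht => ?_
  have h1 : ((-(1+X)) : Polynomial ℤ) ^ t = C ((-1)^t) * (1+X)^t := by
    rw [neg_pow]
    rw [map_pow, map_neg, Polynomial.C_1]
  have h2 : ((2 : Polynomial ℤ)) ^ (n - t) = C ((2:ℤ) ^ (n - t)) := by
    rw [map_pow]; norm_num
  have h3 : ((n.choose t : Polynomial ℤ)) = C ((n.choose t : ℤ)) := by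
    simp
  rw [h1, h2, h3, map_mul, map_mul]
  ring

/-- key polynomial identity for the kernel relation -/
lemma key1 (s : ℕ) (hs : 1 ≤ s) :
    ∑ t ∈ range (s + 1), C ((-1) ^ t * Wt s t) * (1 + X : Polynomial ℤ) ^ (s - 1 + t)
      = -(X * ((1 - X) ^ (s - 1) * (1 + X) ^ (s - 1))) := by
  have base : ∑ t ∈ range s,
      C ((-1) ^ t * (2 ^ (s - 1 - t) * ((s-1).choose t : ℤ))) * (1 + X : Polynomial ℤ) ^ (s - 1 + t)
      = (1 - X) ^ (s - 1) * (1 + X) ^ (s - 1) := by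
    rw [show range s = range ((s-1)+1) by congr 1; omega]
    rw [binom_expand (s-1), Finset.sum_mul]
    refine Finset.sum_congr rfl fun t ht => ?_
    rw [pow_add]
    ring_nf
  have split : ∀ t ∈ range (s+1),
      C ((-1) ^ t * Wt s t) * (1 + X : Polynomial ℤ) ^ (s - 1 + t)
      = C ((-1) ^ t * (2 ^ (s - 1 - t) * ((s-1).choose t : ℤ))) * (1 + X) ^ (s - 1 + t)
        + C ((-1) ^ t * (if t = 0 then 0 else 2 ^ (s - t) * ((s - 1).choose (t - 1) : ℤ)))
            * (1 + X) ^ (s - 1 + t) := by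
    intro t _
    rw [Wt, mul_add, map_add, add_mul]
  rw [Finset.sum_congr rfl split, Finset.sum_add_distrib]
  have e1 : ∑ t ∈ range (s+1),
      C ((-1) ^ t * (2 ^ (s - 1 - t) * ((s-1).choose t : ℤ))) * (1 + X : Polynomial ℤ) ^ (s - 1 + t)
      = (1 - X) ^ (s - 1) * (1 + X) ^ (s - 1) := by
    rw [Finset.sum_range_succ, Nat.choose_eq_zero_of_lt (by omega)]
    simpa using base
  have e2 : ∑ t ∈ range (s+1),
      C ((-1) ^ t * (if t = 0 then 0 else 2 ^ (s - t) * ((s - 1).choose (t - 1) : ℤ)))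
        * (1 + X : Polynomial ℤ) ^ (s - 1 + t)
      = -((1+X) * ((1 - X) ^ (s - 1) * (1 + X) ^ (s - 1))) := by
    rw [Finset.sum_range_succ']
    have hf0 : C ((-1) ^ 0 * (if (0:ℕ) = 0 then (0:ℤ) else 2 ^ (s - 0) * ((s - 1).choose (0 - 1) : ℤ)))
        * (1 + X : Polynomial ℤ) ^ (s - 1 + 0) = 0 := by
      rw [if_pos rfl]
      simp
    rw [hf0, add_zero]
    have hterm : ∀ t ∈ range s,
        C ((-1) ^ (t+1) * (if t + 1 = 0 then 0 else 2 ^ (s - (t+1)) * ((s - 1).choose (t + 1 - 1) : ℤ)))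
          * (1 + X : Polynomial ℤ) ^ (s - 1 + (t+1))
        = -((1+X) * (C ((-1) ^ t * (2 ^ (s - 1 - t) * ((s-1).choose t : ℤ))) * (1 + X) ^ (s - 1 + t))) := by
      intro t ht
      rw [if_neg (by omega)]
      have h1 : t + 1 - 1 = t := by omega
      have h2 : s - (t+1) = s - 1 - t := by omega
      have h3 : s - 1 + (t+1) = (s - 1 + t) + 1 := by omega
      rw [h1, h2, h3, pow_succ]
      simp only [map_mul, map_pow, map_neg, Polynomial.C_1]
      ring
    rw [Finset.sum_congr rfl hterm, Finset.sum_neg_distrib, ← Finset.mul_sum, base]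
  rw [e1, e2]
  ring

lemma odd_coeff_zero (n m : ℕ) (hm : m % 2 = 1) :
    ((1 - X ^ 2 : Polynomial ℤ) ^ n).coeff m = 0 := by
  have hexp : ((1 - X^2 : Polynomial ℤ)) ^ n
      = ∑ j ∈ range (n+1), C ((-1:ℤ)^j * (n.choose j : ℤ)) * X ^ (2*j) := by
    have h := add_pow (-X^2 : Polynomial ℤ) 1 n
    have hb : (-X^2 : Polynomial ℤ) + 1 = 1 - X^2 := by ring
    rw [hb] at h
    rw [h]
    refine Finset.sum_congr rfl fun j hj => ?_
    have h1 : ((-X^2 : Polynomial ℤ)) ^ j = C ((-1:ℤ)^j) * X ^ (2*j) := by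
      rw [neg_pow, map_pow, map_neg, Polynomial.C_1, pow_mul]
    have h3 : ((n.choose j : Polynomial ℤ)) = C ((n.choose j : ℤ)) := by simp
    rw [h1, h3, map_mul, one_pow, mul_one]
    ring
  rw [hexp, finset_sum_coeff]
  refine Finset.sum_eq_zero fun j hj => ?_
  rw [coeff_C_mul, coeff_X_pow, if_neg (by omega), mul_zero]

/-- the kernel relation R1 -/
lemma rel1 (s : ℕ) (hs : 1 ≤ s) (k : ℕ) :
    ∑ t ∈ range (s + 1), (-1:ℤ) ^ t * Wt s t * ((s - 1 + t).choose (2 * k) : ℤ) = 0 := by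
  have h := congrArg (fun p => Polynomial.coeff p (2 * k)) (key1 s hs)
  simp only [finset_sum_coeff] at h
  have hL : ∀ t ∈ range (s+1),
      (C ((-1) ^ t * Wt s t) * (1 + X : Polynomial ℤ) ^ (s - 1 + t)).coeff (2*k)
      = (-1:ℤ) ^ t * Wt s t * ((s - 1 + t).choose (2 * k) : ℤ) := by
    intro t _
    rw [coeff_C_mul, coeff_one_add_X_pow]
  rw [Finset.sum_congr rfl hL] at h
  rw [h]
  have hsq : ((1 - X) ^ (s-1) * (1 + X) ^ (s-1) : Polynomial ℤ) = (1 - X^2) ^ (s-1) := by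
    rw [← mul_pow]; congr 1; ring
  rw [hsq, coeff_neg]
  rcases Nat.eq_zero_or_pos k with hk | hk
  · subst hk
    show -(X * (1 - X^2)^(s-1) : Polynomial ℤ).coeff 0 = 0
    rw [Polynomial.mul_coeff_zero, coeff_X_zero, zero_mul, neg_zero]
  · rw [show 2 * k = (2*k - 1) + 1 by omega, coeff_X_mul,
      odd_coeff_zero (s-1) (2*k-1) (by omega), neg_zero]

/-- `N(y) = y - (2-y)^s` coefficients -/
def Nco (s u : ℕ) : ℤ :=
  (if u = 1 then 1 else 0) - (-1:ℤ)^u * ((s.choose u : ℤ) * 2^(s-u))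

/-- `γ s t = ∑_{u ∈ (t,s]} N u`, the coefficients of `(y - (2-y)^s)/(y-1)` -/
def gam (s t : ℕ) : ℤ := ∑ u ∈ Finset.Ioc t s, Nco s u

lemma Nco_sum_pow (s : ℕ) (hs : 1 ≤ s) :
    ∑ u ∈ range (s+1), C (Nco s u) * (1 + X : Polynomial ℤ) ^ u
      = (1 + X) - (1 - X)^s := by
  have hsplit : ∀ u ∈ range (s+1),
      C (Nco s u) * (1 + X : Polynomial ℤ) ^ u
      = (if u = 1 then (1+X)^1 else 0)
        - C ((-1:ℤ)^u * 2^(s-u) * ((s.choose u : ℤ))) * (1 + X) ^ u := by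
    intro u _
    rw [Nco, map_sub, sub_mul]
    congr 1
    · by_cases h : u = 1
      · subst h; rw [if_pos rfl, if_pos rfl, Polynomial.C_1, one_mul]
      · rw [if_neg h, if_neg h, map_zero, zero_mul]
    · congr 1
      exact congrArg C (by ring)
  rw [Finset.sum_congr rfl hsplit, Finset.sum_sub_distrib]
  have h1 : ∑ u ∈ range (s+1), (if u = 1 then ((1+X):Polynomial ℤ)^1 else 0) = (1+X) := by
    rw [Finset.sum_ite_eq' (range (s+1)) 1 (fun u => ((1+X):Polynomial ℤ)^1)]
    rw [if_pos (by simp; omega), pow_one]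
  rw [h1, ← binom_expand s]

lemma Nco_sum (s : ℕ) (hs : 1 ≤ s) : ∑ u ∈ range (s+1), Nco s u = 0 := by
  unfold Nco
  rw [Finset.sum_sub_distrib]
  have h1 : ∑ u ∈ range (s+1), (if u = 1 then (1:ℤ) else 0) = 1 := by
    rw [Finset.sum_ite_eq' (range (s+1)) 1 (fun _ => (1:ℤ))]
    rw [if_pos (by simp; omega)]
  have h2 : ∑ u ∈ range (s+1), (-1:ℤ)^u * ((s.choose u : ℤ) * 2^(s-u)) = 1 := by
    have h := add_pow (-1 : ℤ) 2 s
    norm_num at h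
    calc ∑ u ∈ range (s+1), (-1:ℤ)^u * ((s.choose u : ℤ) * 2^(s-u))
        = ∑ u ∈ range (s+1), (-1:ℤ)^u * 2^(s-u) * (s.choose u : ℤ) :=
          Finset.sum_congr rfl (fun u _ => by ring)
      _ = 1 := h.symm
  rw [h1, h2, sub_self]

lemma Ioc_eq_erase (s : ℕ) : Finset.Ioc 0 s = (range (s+1)).erase 0 := by
  ext u
  simp only [Finset.mem_Ioc, Finset.mem_erase, Finset.mem_range]
  omega

lemma Nco_zero (s : ℕ) : Nco s 0 = -(2^s) := by
  simp [Nco]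

lemma gam_zero (s : ℕ) (hs : 1 ≤ s) : gam s 0 = 2^s := by
  rw [gam, Ioc_eq_erase, Finset.sum_erase_eq_sub (by simp), Nco_sum s hs, Nco_zero]
  ring

lemma geom_aux (s : ℕ) : ∀ u : ℕ, ∑ t ∈ range u, (X:Polynomial ℤ) * (1+X)^(s+t)
    = (1+X)^(s+u) - (1+X)^s := by
  intro u
  induction u with
  | zero => simp
  | succ u ih =>
      rw [Finset.sum_range_succ, ih, show s + (u+1) = (s+u)+1 by omega, pow_succ]
      ring

lemma keyPoly2 (s : ℕ) (hs : 1 ≤ s) :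
    ∑ t ∈ range s, C (gam s t) * ((X:Polynomial ℤ) * (1+X)^(s+t))
      = (1+X)^(s+1) - ((1-X)*(1+X))^s := by
  have step1 : ∀ t ∈ range s,
      C (gam s t) * ((X:Polynomial ℤ) * (1+X)^(s+t))
      = ∑ u ∈ Finset.Ioc 0 s, (if t < u then C (Nco s u) * ((X:Polynomial ℤ) * (1+X)^(s+t)) else 0) := by
    intro t ht
    rw [gam, map_sum, Finset.sum_mul]
    have hfil : Finset.Ioc t s = (Finset.Ioc 0 s).filter (fun u => t < u) := by
      ext u
      simp only [Finset.mem_Ioc, Finset.mem_filter]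
      omega
    rw [hfil, Finset.sum_filter]
  rw [Finset.sum_congr rfl step1, Finset.sum_comm]
  have step2 : ∀ u ∈ Finset.Ioc 0 s,
      ∑ t ∈ range s, (if t < u then C (Nco s u) * ((X:Polynomial ℤ) * (1+X)^(s+t)) else 0)
      = C (Nco s u) * ((1+X)^(s+u) - (1+X)^s) := by
    intro u hu
    simp only [Finset.mem_Ioc] at hu
    rw [← Finset.sum_filter]
    have hfil : (range s).filter (fun t => t < u) = range u := by
      ext t
      simp only [Finset.mem_range, Finset.mem_filter]
      omega
    rw [hfil, ← Finset.mul_sum, geom_aux s u]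
  rw [Finset.sum_congr rfl step2]
  have step3 : ∀ u ∈ Finset.Ioc 0 s,
      C (Nco s u) * ((1+X:Polynomial ℤ)^(s+u) - (1+X)^s)
      = (1+X)^s * (C (Nco s u) * (1+X)^u) - (1+X)^s * C (Nco s u) := by
    intro u _
    rw [pow_add]
    ring
  rw [Finset.sum_congr rfl step3, Finset.sum_sub_distrib, ← Finset.mul_sum, ← Finset.mul_sum]
  have hA : ∑ u ∈ Finset.Ioc 0 s, C (Nco s u) * (1+X:Polynomial ℤ)^u
      = (1 + X) - (1 - X)^s - C (-(2^s)) := by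
    rw [Ioc_eq_erase, Finset.sum_erase_eq_sub (by simp), Nco_sum_pow s hs]
    rw [pow_zero, mul_one, Nco_zero]
  have hB : ∑ u ∈ Finset.Ioc 0 s, C (Nco s u) = C (2^s : ℤ) := by
    rw [← map_sum]
    congr 1
    rw [Ioc_eq_erase, Finset.sum_erase_eq_sub (by simp), Nco_sum s hs, Nco_zero]
    ring
  rw [hA, hB]
  have hC : (C (-(2^s)) : Polynomial ℤ) = -(2^s : Polynomial ℤ) := by
    rw [map_neg, map_pow]
    norm_num
  have hD : (C ((2:ℤ)^s) : Polynomial ℤ) = (2^s : Polynomial ℤ) := by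
    rw [map_pow]; norm_num
  rw [hC, hD, mul_pow]
  ring

/-- the second relation: the top odd row is an explicit combination of even rows -/
lemma rel2 (s k : ℕ) (hs : 1 ≤ s) :
    ((s+1).choose (2*k+1) : ℤ) = ∑ t ∈ range s, gam s t * ((s+t).choose (2*k) : ℤ) := by
  have h := congrArg (fun p => Polynomial.coeff p (2*k+1)) (keyPoly2 s hs)
  simp only [finset_sum_coeff] at h
  have hL : ∀ t ∈ range s,
      (C (gam s t) * ((X:Polynomial ℤ) * (1+X)^(s+t))).coeff (2*k+1)
      = gam s t * ((s+t).choose (2*k) : ℤ) := by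
    intro t _
    rw [coeff_C_mul, coeff_X_mul, coeff_one_add_X_pow]
  have hsq : (((1 - X)*(1 + X))^s : Polynomial ℤ) = (1 - X^2) ^ s := by
    congr 1; ring
  rw [Finset.sum_congr rfl hL, coeff_sub, coeff_one_add_X_pow, hsq,
      odd_coeff_zero s (2*k+1) (by omega), sub_zero] at h
  exact h.symm

/-- multilinearity in one row over a `range` sum -/
lemma det_updateRow_range_sum {n : ℕ} (A : Matrix (Fin n) (Fin n) ℤ) (r : Fin n)
    (N : ℕ) (c : ℕ → ℤ) (f : ℕ → Fin n → ℤ) :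
    Matrix.det (A.updateRow r (fun k => ∑ t ∈ range N, c t * f t k))
      = ∑ t ∈ range N, c t * Matrix.det (A.updateRow r (f t)) := by
  induction N with
  | zero =>
      simp only [range_zero, Finset.sum_empty]
      exact Matrix.det_eq_zero_of_row_eq_zero r (fun k => by simp)
  | succ N ih =>
      have hfun : (fun k => ∑ t ∈ range (N+1), c t * f t k)
          = (fun k => ∑ t ∈ range N, c t * f t k) + (c N • f N) := by
        funext k
        simp [Finset.sum_range_succ]
      rw [hfun, Matrix.det_updateRow_add, Matrix.det_updateRow_smul, ih, Finset.sum_range_succ]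

section adjacent

variable (s : ℕ)

/-- the row vectors -/
private def vv (s t : ℕ) : Fin s → ℤ := fun k => ((s - 1 + t).choose (2 * (k:ℕ)) : ℤ)

lemma binomDet_mat (i : ℕ) (hs : 1 ≤ s) :
    binomDet s i = Matrix.det (Matrix.of fun r k : Fin s =>
      vv s (if (r:ℕ) < i then (r:ℕ) else (r:ℕ)+1) k) := by
  unfold binomDet
  congr 1
  ext r k
  simp only [Matrix.of_apply, vv]
  by_cases h : (r:ℕ) < i
  · rw [if_pos h, if_pos h]
  · rw [if_neg h, if_neg h]
    congr 2
    omega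

lemma adjacent (j : ℕ) (hs : 1 ≤ s) (hj : j + 1 ≤ s) :
    Wt s j * binomDet s (j + 1) = Wt s (j + 1) * binomDet s j := by
  set A : Matrix (Fin s) (Fin s) ℤ :=
    Matrix.of (fun r k : Fin s => vv s (if (r:ℕ) < j+1 then (r:ℕ) else (r:ℕ)+1) k) with hA
  have hAdet : binomDet s (j+1) = A.det := binomDet_mat s (j+1) hs
  set B : Matrix (Fin s) (Fin s) ℤ :=
    Matrix.of (fun r k : Fin s => vv s (if (r:ℕ) < j then (r:ℕ) else (r:ℕ)+1) k) with hB
  have hBdet : binomDet s j = B.det := binomDet_mat s j hs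
  have hjF : j < s := by omega
  set jF : Fin s := ⟨j, hjF⟩ with hjFdef
  -- row jF of A is vv s j
  have hrowA : A jF = vv s j := by
    funext k
    simp only [hA, Matrix.of_apply, hjFdef, if_pos (show j < j + 1 by omega)]
  -- the zero linear-combination row
  have hzero : (fun k : Fin s => ∑ t ∈ range (s+1), ((-1:ℤ)^t * Wt s t) * vv s t k) = 0 := by
    funext k
    simp only [vv]
    exact rel1 s hs k
  have h0 : Matrix.det (A.updateRow jF (fun k => ∑ t ∈ range (s+1), ((-1:ℤ)^t * Wt s t) * vv s t k)) = 0 := by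
    rw [hzero]
    exact Matrix.det_eq_zero_of_row_eq_zero jF (fun k => by simp)
  rw [det_updateRow_range_sum] at h0
  -- analyze each term
  have hterm : ∀ t ∈ range (s+1), t ≠ j → t ≠ j + 1 →
      ((-1:ℤ)^t * Wt s t) * Matrix.det (A.updateRow jF (vv s t)) = 0 := by
    intro t ht htj htj1
    have htle : t ≤ s := by simp at ht; omega
    rcases lt_or_gt_of_ne htj with hlt | hgt
    · -- t < j : duplicate with row t
      have htlt : t < s := by omega
      have hne : (⟨t, htlt⟩ : Fin s) ≠ jF := by
        simp only [hjFdef, ne_eq, Fin.mk.injEq]; omega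
      have heq : (A.updateRow jF (vv s t)) ⟨t, htlt⟩ = (A.updateRow jF (vv s t)) jF := by
        rw [Matrix.updateRow_self, Matrix.updateRow_ne hne]
        funext k
        simp only [hA, Matrix.of_apply, if_pos (show t < j + 1 by omega)]
      rw [Matrix.det_zero_of_row_eq hne heq, mul_zero]
    · -- t > j + 1 : duplicate with row t - 1
      have htlt : t - 1 < s := by omega
      have hne : (⟨t - 1, htlt⟩ : Fin s) ≠ jF := by
        simp only [hjFdef, ne_eq, Fin.mk.injEq]; omega
      have heq : (A.updateRow jF (vv s t)) ⟨t - 1, htlt⟩ = (A.updateRow jF (vv s t)) jF := by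
        rw [Matrix.updateRow_self, Matrix.updateRow_ne hne]
        funext k
        simp only [hA, Matrix.of_apply, if_neg (show ¬ (t - 1 < j + 1) by omega)]
        congr 2
        omega
      rw [Matrix.det_zero_of_row_eq hne heq, mul_zero]
  -- sum reduces to two terms
  have hsum : ∑ t ∈ range (s+1), ((-1:ℤ)^t * Wt s t) * Matrix.det (A.updateRow jF (vv s t))
      = ((-1:ℤ)^j * Wt s j) * Matrix.det (A.updateRow jF (vv s j))
        + ((-1:ℤ)^(j+1) * Wt s (j+1)) * Matrix.det (A.updateRow jF (vv s (j+1))) := by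
    rw [← Finset.sum_filter_add_sum_filter_not (range (s+1)) (fun t => t = j ∨ t = j + 1)]
    have hfil : (range (s+1)).filter (fun t => t = j ∨ t = j + 1) = {j, j+1} := by
      ext t
      simp only [Finset.mem_filter, Finset.mem_range, Finset.mem_insert, Finset.mem_singleton]
      omega
    rw [hfil, Finset.sum_pair (by omega : j ≠ j + 1)]
    have : ∑ t ∈ (range (s+1)).filter (fun t => ¬(t = j ∨ t = j + 1)),
        ((-1:ℤ)^t * Wt s t) * Matrix.det (A.updateRow jF (vv s t)) = 0 := by
      refine Finset.sum_eq_zero fun t ht => ?_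
      simp only [Finset.mem_filter, Finset.mem_range] at ht
      exact hterm t (by simp; omega) (by omega) (by omega)
    rw [this, add_zero]
  rw [hsum] at h0
  -- identify the two determinants
  have hAj : A.updateRow jF (vv s j) = A := by
    rw [← hrowA, Matrix.updateRow_eq_self]
  have hBj : A.updateRow jF (vv s (j+1)) = B := by
    funext r k
    by_cases h : r = jF
    · subst h
      rw [Matrix.updateRow_self]
      simp only [hB, Matrix.of_apply, hjFdef, if_neg (show ¬ (j < j) by omega)]
    · rw [Matrix.updateRow_ne h]
      simp only [hA, hB, Matrix.of_apply]
      have hrj : (r:ℕ) ≠ j := by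
        intro hc
        exact h (by apply Fin.ext; exact hc)
      by_cases h2 : (r:ℕ) < j
      · rw [if_pos (by omega), if_pos h2]
      · rw [if_neg (by omega), if_neg h2]
  rw [hAj, hBj, ← hAdet, ← hBdet] at h0
  have hcan : ((-1:ℤ)^j) ≠ 0 := by positivity
  apply mul_left_cancel₀ hcan
  have hp : (-1:ℤ)^(j+1) = -((-1:ℤ)^j) := by rw [pow_succ]; ring
  rw [hp] at h0
  linarith [h0]

end adjacent

lemma prop_zero (s : ℕ) (hs : 1 ≤ s) : ∀ j, j ≤ s →
    binomDet s j * Wt s 0 = binomDet s 0 * Wt s j := by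
  intro j
  induction j with
  | zero => intro _; ring
  | succ j ih =>
      intro hj
      have hadj := adjacent s j hs (by omega)
      have hih := ih (by omega)
      have hWj : Wt s j ≠ 0 := ne_of_gt (Wt_pos (by omega))
      apply mul_left_cancel₀ hWj
      linear_combination Wt s 0 * hadj + Wt s (j+1) * hih

/-- the row-difference sweep preserves the determinant -/
lemma det_sweep (n : ℕ) (e : ℕ → ℕ → ℤ) :
    Matrix.det (Matrix.of fun j k : Fin n => e j k)
      = Matrix.det (Matrix.of fun j k : Fin n =>
          if (j:ℕ) = 0 then e 0 k else e j k - e ((j:ℕ)-1) k) := by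
  set F : ℕ → Matrix (Fin n) (Fin n) ℤ := fun m =>
    Matrix.of fun j k => if (j:ℕ) ≤ m then e j k else e j k - e ((j:ℕ)-1) k with hF
  have hstep : ∀ m, (F (m+1)).det = (F m).det := by
    intro m
    by_cases hm : m + 1 < n
    · set r : Fin n := ⟨m+1, hm⟩ with hr
      set r' : Fin n := ⟨m, by omega⟩ with hr'
      have hne : r ≠ r' := by simp [hr, hr', Fin.ext_iff]
      have heq : F m = (F (m+1)).updateRow r ((F (m+1)) r + (-1:ℤ) • (F (m+1)) r') := by
        funext j k
        by_cases hj : j = r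
        · subst hj
          rw [Matrix.updateRow_self]
          simp only [hF, Matrix.of_apply, Pi.add_apply, Pi.smul_apply, smul_eq_mul, hr, hr']
          rw [if_neg (by omega), if_pos (by omega), if_pos (by omega)]
          simp only [show (m+1) - 1 = m by omega]
          ring
        · rw [Matrix.updateRow_ne hj]
          simp only [hF, Matrix.of_apply]
          have hjm : (j:ℕ) ≠ m + 1 := by
            intro hc
            exact hj (by apply Fin.ext; simp [hr, hc])
          by_cases h2 : (j:ℕ) ≤ m
          · rw [if_pos h2, if_pos (by omega)]
          · rw [if_neg h2, if_neg (by omega)]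
      rw [heq, Matrix.det_updateRow_add_smul_self _ hne]
    · have : F (m+1) = F m := by
        funext j k
        simp only [hF, Matrix.of_apply]
        have : (j:ℕ) ≤ m ∧ (j:ℕ) ≤ m + 1 := by
          have := j.isLt; omega
        rw [if_pos this.1, if_pos this.2]
      rw [this]
  have hall : ∀ m, (F m).det = (F 0).det := by
    intro m
    induction m with
    | zero => rfl
    | succ m ih => rw [hstep m, ih]
  have htop : Matrix.of (fun j k : Fin n => e j k) = F n := by
    funext j k
    simp only [hF, Matrix.of_apply]
    rw [if_pos (le_of_lt j.isLt)]
  have hbot : F 0 = Matrix.of (fun j k : Fin n =>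
      if (j:ℕ) = 0 then e 0 k else e j k - e ((j:ℕ)-1) k) := by
    funext j k
    simp only [hF, Matrix.of_apply]
    by_cases hj : (j:ℕ) = 0
    · rw [if_pos (by omega), if_pos hj, hj]
    · rw [if_neg (by omega), if_neg hj]
  rw [htop, hall n, hbot]

/-- one induction step: `D_{s+1,0} = 2^s · D_{s,0}` -/
lemma stepB (s : ℕ) (hs : 1 ≤ s) : binomDet (s+1) 0 = 2^s * binomDet s 0 := by
  have hz : 0 < s := hs
  set z : Fin s := ⟨0, hz⟩ with hzdef
  set M1 : Matrix (Fin (s+1)) (Fin (s+1)) ℤ := Matrix.of (fun j k : Fin (s+1) =>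
    if (j:ℕ) = 0 then (((s+1).choose (2*(k:ℕ))) : ℤ)
    else if (k:ℕ) = 0 then 0 else (((s+(j:ℕ)).choose (2*(k:ℕ)-1)) : ℤ)) with hM1
  have h0 : binomDet (s+1) 0
      = Matrix.det (Matrix.of fun j k : Fin (s+1) => (((s+1+(j:ℕ)).choose (2*(k:ℕ))) : ℤ)) := by
    unfold binomDet
    congr 1
  -- Step 1: first sweep
  rw [h0, det_sweep (s+1) (fun j k => (((s+1+j).choose (2*k)) : ℤ))]
  have h1 : (Matrix.of fun j k : Fin (s+1) =>
        if (j:ℕ) = 0 then (((s+1+0).choose (2*(k:ℕ))) : ℤ)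
        else (((s+1+(j:ℕ)).choose (2*(k:ℕ))) : ℤ) - (((s+1+((j:ℕ)-1)).choose (2*(k:ℕ))) : ℤ))
      = M1 := by
    funext j k
    simp only [hM1, Matrix.of_apply]
    by_cases hj : (j:ℕ) = 0
    · rw [if_pos hj, if_pos hj]
    · rw [if_neg hj, if_neg hj]
      by_cases hk : (k:ℕ) = 0
      · rw [if_pos hk, hk]
        norm_num
      · rw [if_neg hk]
        have harg : s + 1 + (j:ℕ) = (s + ((j:ℕ)-1) + 1) + 1 := by omega
        have harg2 : s + 1 + ((j:ℕ)-1) = s + ((j:ℕ)-1) + 1 := by omega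
        have hk2 : 2*(k:ℕ) = (2*(k:ℕ)-1) + 1 := by omega
        rw [harg, harg2, hk2, Nat.choose_succ_succ (s + ((j:ℕ)-1) + 1) (2*(k:ℕ)-1)]
        have harg3 : s + ((j:ℕ)-1) + 1 = s + (j:ℕ) := by omega
        rw [harg3]
        push_cast
        ring
  rw [h1]
  -- Step 2: expand along column 0
  rw [Matrix.det_succ_column_zero]
  have hcol : ∀ i : Fin (s+1), i ≠ 0 →
      (-1:ℤ)^(i:ℕ) * M1 i 0 * (M1.submatrix i.succAbove Fin.succ).det = 0 := by
    intro i hi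
    have hival : (i:ℕ) ≠ 0 := fun hc => hi (Fin.ext hc)
    simp only [hM1, Matrix.of_apply]
    rw [if_neg hival]
    simp
  rw [Fintype.sum_eq_single (0 : Fin (s+1)) hcol]
  have hM10 : M1 0 0 = 1 := by
    simp [hM1]
  rw [hM10]
  -- Step 3: identify the minor
  have h2 : M1.submatrix ((0 : Fin (s+1)).succAbove) Fin.succ
      = Matrix.of (fun j k : Fin s => (((s+1+(j:ℕ)).choose (2*(k:ℕ)+1)) : ℤ)) := by
    funext j k
    simp only [Matrix.submatrix_apply, Matrix.of_apply, Fin.zero_succAbove, Fin.val_succ, hM1]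
    rw [if_neg (by omega), if_neg (by omega)]
    congr 2 <;> omega
  rw [h2]
  -- Step 4: second sweep
  rw [det_sweep s (fun j k => (((s+1+j).choose (2*k+1)) : ℤ))]
  set B0 : Matrix (Fin s) (Fin s) ℤ :=
    Matrix.of (fun j k : Fin s => (((s+(j:ℕ)).choose (2*(k:ℕ))) : ℤ)) with hB0
  have hB0det : binomDet s 0 = B0.det := by
    unfold binomDet
    congr 1
  set r0 : Fin s → ℤ := fun k => (((s+1).choose (2*(k:ℕ)+1)) : ℤ) with hr0
  have h3 : (Matrix.of fun j k : Fin s =>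
        if (j:ℕ) = 0 then (((s+1+0).choose (2*(k:ℕ)+1)) : ℤ)
        else (((s+1+(j:ℕ)).choose (2*(k:ℕ)+1)) : ℤ) - (((s+1+((j:ℕ)-1)).choose (2*(k:ℕ)+1)) : ℤ))
      = B0.updateRow z r0 := by
    funext j k
    by_cases hj : j = z
    · subst hj
      rw [Matrix.updateRow_self]
      simp only [Matrix.of_apply, hzdef, hr0]
      norm_num
    · have hjval : (j:ℕ) ≠ 0 := by
        intro hc
        exact hj (by apply Fin.ext; simpa [hzdef] using hc)
      rw [Matrix.updateRow_ne hj]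
      simp only [Matrix.of_apply, hB0]
      rw [if_neg hjval]
      have harg : s + 1 + (j:ℕ) = (s + (j:ℕ)) + 1 := by omega
      have harg2 : s + 1 + ((j:ℕ)-1) = s + (j:ℕ) := by omega
      rw [harg, harg2, Nat.choose_succ_succ (s + (j:ℕ)) (2*(k:ℕ))]
      push_cast
      ring
  rw [h3]
  -- Step 5: replace the top row by the combination
  have h4 : r0 = fun k : Fin s => ∑ t ∈ range s, gam s t * (((s+t).choose (2*(k:ℕ))) : ℤ) := by
    funext k
    exact rel2 s (k:ℕ) hs
  rw [h4, det_updateRow_range_sum]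
  have h5 : ∀ t ∈ range s, t ≠ 0 →
      gam s t * (B0.updateRow z (fun k => (((s+t).choose (2*(k:ℕ))) : ℤ))).det = 0 := by
    intro t ht ht0
    have htlt : t < s := by simpa using ht
    have hne : (⟨t, htlt⟩ : Fin s) ≠ z := by
      simp only [ne_eq, Fin.ext_iff, hzdef]
      omega
    have heq : (B0.updateRow z (fun k => (((s+t).choose (2*(k:ℕ))) : ℤ))) ⟨t, htlt⟩
        = (B0.updateRow z (fun k => (((s+t).choose (2*(k:ℕ))) : ℤ))) z := by
      rw [Matrix.updateRow_self, Matrix.updateRow_ne hne]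
      funext k
      simp only [hB0, Matrix.of_apply]
    rw [Matrix.det_zero_of_row_eq hne heq, mul_zero]
  rw [Finset.sum_eq_single 0 (fun t ht ht0 => h5 t ht ht0) (by intro h; simp at h; omega)]
  have h6 : B0.updateRow z (fun k : Fin s => (((s+0).choose (2*(k:ℕ))) : ℤ)) = B0 := by
    have hrow : (fun k : Fin s => (((s+0).choose (2*(k:ℕ))) : ℤ)) = B0 z := by
      funext k
      simp only [hB0, Matrix.of_apply, hzdef]
    rw [hrow, Matrix.updateRow_eq_self]
  rw [h6, gam_zero s hs, hB0det]
  simp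

lemma lemB : ∀ s : ℕ, 1 ≤ s → binomDet s 0 = 2 ^ (s.choose 2) := by
  intro s
  induction s with
  | zero => omega
  | succ s ih =>
      intro _
      rcases Nat.eq_zero_or_pos s with h | h
      · subst h
        unfold binomDet
        rw [show ((1:ℕ).choose 2) = 0 by rfl, pow_zero]
        rw [Matrix.det_fin_one]
        simp
      · rw [stepB s h, ih h, ← pow_add]
        congr 1
        rw [Nat.choose_succ_succ s 1, Nat.choose_one_right]
  
lemma main_eval (s j : ℕ) (hs : 1 ≤ s) (hj : j ≤ s) :
    binomDet s j * 2 ^ (s - 1) = 2 ^ (s.choose 2) * Wt s j := by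
  have h := prop_zero s hs j hj
  rw [Wt_zero, lemB s hs] at h
  exact h

lemma Wpascal (d i : ℕ) (hd : 2 ≤ d) (h1 : 1 ≤ i) (h2 : i ≤ d - 1) :
    Wt d i = Wt (d-1) (i-1) + 2 * Wt (d-1) i := by
  have he : d = (d - 1) + 1 := by omega
  set e := d - 1 with hedef
  have hie : i ≤ e := h2
  have he1 : 1 ≤ e := by omega
  rw [show d = e + 1 from he]
  unfold Wt
  rw [if_neg (show ¬ i = 0 by omega)]
  have hP1 : (e.choose i : ℤ) = ((e-1).choose (i-1) : ℤ) + ((e-1).choose i : ℤ) := by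
    have h := Nat.choose_succ_succ (e-1) (i-1)
    simp only [Nat.succ_eq_add_one] at h
    rw [show e - 1 + 1 = e by omega, show i - 1 + 1 = i by omega] at h
    exact_mod_cast h
  have key : (2:ℤ) * (2^(e-1-i) * ((e-1).choose i : ℤ)) = 2^(e-i) * ((e-1).choose i : ℤ) := by
    rcases lt_or_eq_of_le hie with hlt | heq
    · rw [show e - i = (e-1-i) + 1 by omega, pow_succ]
      ring
    · rw [Nat.choose_eq_zero_of_lt (show e - 1 < i by omega)]
      simp
  by_cases hi1 : i = 1
  · subst hi1
    rw [show (1:ℕ) - 1 = 0 from rfl, if_pos rfl, if_neg (show ¬ (1:ℕ) = 0 by omega)]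
    rw [show e + 1 - 1 - 1 = e - 1 by omega, show e + 1 - 1 = e by omega,
        show e - 1 - 0 = e - 1 by omega]
    simp only [Nat.choose_zero_right, Nat.cast_one, mul_one, add_zero]
    have hpow : (2:ℤ)^e = 2 * 2^(e-1) := by
      have h := pow_succ (2:ℤ) (e-1)
      rw [show e - 1 + 1 = e by omega] at h
      linarith
    simp only [show (1:ℕ) - 1 = 0 from rfl, Nat.choose_zero_right, Nat.cast_one] at hP1
    linear_combination 2^(e-1) * hP1 - key + hpow
  · have hP2 : (e.choose (i-1) : ℤ) = ((e-1).choose (i-2) : ℤ) + ((e-1).choose (i-1) : ℤ) := by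
      have h := Nat.choose_succ_succ (e-1) (i-2)
      simp only [Nat.succ_eq_add_one] at h
      rw [show e - 1 + 1 = e by omega, show i - 2 + 1 = i - 1 by omega] at h
      exact_mod_cast h
    rw [if_neg (show ¬ i - 1 = 0 by omega), if_neg (show ¬ i = 0 by omega)]
    rw [show e + 1 - 1 - i = e - i by omega, show e + 1 - i = (e - i) + 1 by omega,
        show e + 1 - 1 = e by omega, show e - 1 - (i-1) = e - i by omega,
        show e - (i-1) = (e - i) + 1 by omega, show i - 1 - 1 = i - 2 by omega]
    linear_combination 2^(e-i) * hP1 + 2^((e-i)+1) * hP2 - key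

/-- Theorem: for `d ≥ 2` and `1 ≤ i ≤ d−1`, the binomial determinants satisfy the
Pascal-type recurrence `2 · D_{d,i} = 2^{d−1} · D_{d−1,i−1} + 2^{d} · D_{d−1,i}`;
equivalently, the normalized determinants `D'_{d,i} = D_{d,i} / 2^{d(d−1)/2 − i}`
satisfy `D'_{d,i} = D'_{d−1,i−1} + D'_{d−1,i}`. -/
theorem binomDet_pascal_recurrence (d i : ℕ) (hd : 2 ≤ d) (hi1 : 1 ≤ i) (hi2 : i ≤ d - 1) :
    2 * binomDet d i = 2 ^ (d - 1) * binomDet (d - 1) (i - 1) + 2 ^ d * binomDet (d - 1) i := by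
  have hd1 : 1 ≤ d - 1 := by omega
  have h1 : binomDet d i * 2 ^ (d - 1) = 2 ^ (d.choose 2) * Wt d i :=
    main_eval d i (by omega) (by omega)
  have h2 : binomDet (d-1) (i-1) * 2 ^ (d-1-1) = 2 ^ ((d-1).choose 2) * Wt (d-1) (i-1) :=
    main_eval (d-1) (i-1) hd1 (by omega)
  have h3 : binomDet (d-1) i * 2 ^ (d-1-1) = 2 ^ ((d-1).choose 2) * Wt (d-1) i :=
    main_eval (d-1) i hd1 (by omega)
  have h4 := Wpascal d i hd hi1 hi2
  have hp1 : (2:ℤ) ^ (d.choose 2) = 2 ^ ((d-1).choose 2) * 2 ^ (d-1) := by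
    rw [← pow_add]
    congr 1
    have h := Nat.choose_succ_succ (d-1) 1
    simp only [Nat.succ_eq_add_one] at h
    rw [show d - 1 + 1 = d by omega, Nat.choose_one_right] at h
    norm_num at h
    omega
  have hp2 : (2:ℤ) ^ (d-1) = 2 ^ (d-1-1) * 2 := by
    rw [← pow_succ]
    congr 1
    omega
  have hp3 : (2:ℤ) ^ d = 2 ^ (d-1-1) * 4 := by
    rw [show d = (d-1-1) + 2 by omega, pow_add]
    norm_num
  have hz : ((2:ℤ) ^ (d-1)) ≠ 0 := by positivity
  apply mul_left_cancel₀ hz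
  linear_combination 2 * h1 + 2 * (Wt d i) * hp1 + 2 * (2 ^ ((d-1).choose 2)) * (Wt d i) * hp2
    + 4 * (2 ^ (d-1-1)) * (2 ^ ((d-1).choose 2)) * h4
    - (2 ^ (d-1)) * (binomDet (d-1) (i-1)) * hp2 - 2 * (2 ^ (d-1)) * h2
    - 2 * (2 ^ ((d-1).choose 2)) * (Wt (d-1) (i-1)) * hp2
    - (2 ^ d) * (binomDet (d-1) i) * hp2 - 2 * (2 ^ d) * h3
    - 2 * (2 ^ ((d-1).choose 2)) * (Wt (d-1) i) * hp3
end

section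
/- Let d ≥ 1 and let 0 ≤ a_1 < a_2 < … < a_d and 1 ≤ b_1 < b_2 < … < b_d be integers. Then (b_1 b_2 ⋯ b_d) · det( C(a_i, b_j) )_{1 ≤ i,j ≤ d} = (a_1 a_2 ⋯ a_d) · det( C(a_i − 1, b_j − 1) )_{1 ≤ i,j ≤ d}, where in the case a_1 = 0 the entries C(a_1 − 1, b_j − 1) = C(−1, b_j − 1) are taken to be 0. -/
/-- Lemma (Gessel–Viennot): let `d ≥ 1`, `0 ≤ a_1 < … < a_d` and `1 ≤ b_1 < … < b_d`.
Then `(b_1 ⋯ b_d) · det(C(a_i, b_j)) = (a_1 ⋯ a_d) · det(C(a_i − 1, b_j − 1))`,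
where in case `a_i = 0` the entries `C(a_i − 1, b_j − 1) = C(−1, b_j − 1)` are
taken to be `0`. -/
theorem binomDet_shift (d : ℕ) (hd : 1 ≤ d) (a b : Fin d → ℕ)
    (ha : StrictMono a) (hb : StrictMono b) (hb1 : ∀ j, 1 ≤ b j) :
    (∏ j, (b j : ℤ)) *
        Matrix.det (Matrix.of fun i j : Fin d => ((a i).choose (b j) : ℤ)) =
      (∏ i, (a i : ℤ)) *
        Matrix.det (Matrix.of fun i j : Fin d =>
          if a i = 0 then 0 else ((a i - 1).choose (b j - 1) : ℤ)) := by
  rw [← Matrix.det_mul_row (fun j => (b j : ℤ)), ← Matrix.det_mul_column (fun i => (a i : ℤ))]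
  congr 1
  ext i j
  simp only [Matrix.of_apply]
  rcases Nat.eq_zero_or_pos (a i) with h | h
  · have hbj := hb1 j
    simp [h, Nat.choose_eq_zero_of_lt (by omega : 0 < b j)]
  · rw [if_neg h.ne']
    have hbj := hb1 j
    obtain ⟨m, hm⟩ : ∃ m, a i = m + 1 := ⟨a i - 1, by omega⟩
    obtain ⟨k, hk⟩ : ∃ k, b j = k + 1 := ⟨b j - 1, by omega⟩
    rw [hk, hm]
    push_cast
    have := Nat.add_one_mul_choose_eq m k
    have : ((m+1) * Nat.choose m k : ℤ) = ((Nat.choose (m+1) (k+1) * (k+1) : ℕ) : ℤ) := by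
      exact_mod_cast congrArg (Nat.cast : ℕ → ℤ) this
    push_cast at this
    linarith
end

section
/- Let d ≥ 2, let x ≥ 0 be an integer, and let 0 = b_1 < b_2 < … < b_d be integers. Then the d×d binomial determinant with consecutive row indices x, x+1, …, x+d−1 and column indices b_1, …, b_d satisfies det( C(x+i−1, b_j) )_{1 ≤ i,j ≤ d} = det( C(x+i−1, b_{j+1} − 1) )_{1 ≤ i,j ≤ d−1}. -/
/-- Lemma (Gessel–Viennot): let `d ≥ 2`, `x ≥ 0`, and `0 = b_1 < b_2 < … < b_d`.
Then the `d × d` binomial determinant with consecutive row indices `x, x+1, …, x+d−1`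
and column indices `b_1, …, b_d` satisfies
`det(C(x+i−1, b_j))_{1≤i,j≤d} = det(C(x+i−1, b_{j+1} − 1))_{1≤i,j≤d−1}`. -/
theorem binomDet_consecutive_reduction (d : ℕ) (hd : 2 ≤ d) (x : ℕ)
    (b : Fin d → ℕ) (hb : StrictMono b) (hb0 : b ⟨0, by omega⟩ = 0) :
    Matrix.det (Matrix.of fun i j : Fin d => ((x + (i : ℕ)).choose (b j) : ℤ)) =
      Matrix.det (Matrix.of fun i j : Fin (d - 1) =>
        ((x + (i : ℕ)).choose (b ⟨(j : ℕ) + 1, by omega⟩ - 1) : ℤ)) := by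
  obtain ⟨e, rfl⟩ : ∃ e, d = e + 1 := ⟨d - 1, by omega⟩
  have hb0' : b 0 = 0 := hb0
  have hbpos : ∀ j : Fin (e + 1), j ≠ 0 → 1 ≤ b j := by
    intro j hj
    have : b 0 < b j := hb (by
      rcases Fin.eq_zero_or_eq_succ j with h | ⟨k, rfl⟩
      · exact absurd h hj
      · exact Fin.succ_pos k)
    omega
  set M : Matrix (Fin (e + 1)) (Fin (e + 1)) ℤ :=
    Matrix.of fun i j : Fin (e + 1) => ((x + (i : ℕ)).choose (b j) : ℤ) with hM
  set P : Matrix (Fin (e + 1)) (Fin (e + 1)) ℤ :=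
    Matrix.of (Fin.cons (fun j => ((x.choose (b j)) : ℤ))
      (fun (i : Fin e) (j : Fin (e + 1)) =>
        if j = 0 then 0 else ((x + (i : ℕ)).choose (b j - 1) : ℤ))) with hP
  have hdet : M.det = P.det := by
    apply Matrix.det_eq_of_forall_row_eq_smul_add_pred (fun _ => (1 : ℤ))
    · intro j
      simp [hM, hP]
    · intro i j
      simp only [hM, hP, Matrix.of_apply, Fin.cons_succ, Pi.add_apply, one_smul,
        Pi.smul_apply, smul_eq_mul]
      by_cases hj : j = 0
      · subst hj
        simp [hb0', Nat.choose_zero_right]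
      · simp only [if_neg hj]
        obtain ⟨k, hk⟩ : ∃ k, b j = k + 1 := ⟨b j - 1, by have := hbpos j hj; omega⟩
        simp only [Fin.val_succ, Fin.coe_castSucc, hk, Nat.add_sub_cancel]
        rw [show x + ((i : ℕ) + 1) = (x + (i : ℕ)) + 1 by ring, Nat.choose_succ_succ]
        push_cast
        ring
  rw [hdet, Matrix.det_succ_column_zero, Fin.sum_univ_succ]
  have hz : ∀ i : Fin e, P i.succ 0 = 0 := by
    intro i; simp [hP]
  simp only [hz, Fin.val_zero, pow_zero, one_mul, mul_zero, zero_mul, Finset.sum_const_zero,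
    add_zero, Fin.val_succ]
  have h00 : P 0 0 = 1 := by simp [hP, hb0']
  rw [h00, one_mul]
  rfl
end

section
/- Let F be a field of prime characteristic p and let A_1, …, A_d be nonempty finite subsets of F with |A_i| = k_i. Suppose that (i) 0 ≤ ∑_{i=1}^d (k_i − 1) − d(d−1) < p, (ii) 2d < p, and (iii) the integer binomial determinant det( C(k_j − 1, 2(k−1)) )_{1 ≤ j,k ≤ d} (rows k_1 − 1, …, k_d − 1, columns 0, 2, …, 2(d−1)) is not divisible by p. Then the set C = { a_1 + a_2 + ⋯ + a_d : a_i ∈ A_i and a_i ≠ a_j, a_i ≠ −a_j for all i ≠ j } has cardinality |C| ≥ ∑_{i=1}^d (k_i − 1) − d(d−1) + 1. -/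
open Finset Polynomial in
lemma lagrange_power_sum {F : Type*} [Field F] [DecidableEq F] (A : Finset F) (e : ℕ)
    (he : e < A.card) :
    ∑ a ∈ A, a ^ e * ∏ b ∈ A.erase a, (a - b)⁻¹ =
      if e = A.card - 1 then 1 else 0 := by
  have hinj : Set.InjOn (id : F → F) A := Function.injective_id.injOn
  have hdeg : (X ^ e : F[X]).degree < A.card := by
    rw [degree_X_pow]; exact_mod_cast he
  have h := Lagrange.eq_interpolate hinj hdeg
  have h2 := congrArg (fun q : F[X] => q.coeff (A.card - 1)) h
  simp only [Lagrange.interpolate_apply, id_eq, eval_pow, eval_X,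
    Polynomial.finset_sum_coeff, coeff_C_mul, coeff_X_pow] at h2
  have hbasis : ∀ a ∈ A, (Lagrange.basis A id a).coeff (A.card - 1)
      = ∏ b ∈ A.erase a, (a - b)⁻¹ := by
    intro a ha
    have hnd : (Lagrange.basis A id a).natDegree = A.card - 1 :=
      Lagrange.natDegree_basis hinj ha
    rw [← hnd, Polynomial.coeff_natDegree, Lagrange.basis, Polynomial.leadingCoeff_prod]
    refine Finset.prod_congr rfl fun b _ => ?_
    rw [Lagrange.basisDivisor, Polynomial.leadingCoeff_mul, Polynomial.leadingCoeff_C,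
      leadingCoeff_X_sub_C, mul_one, id_eq, id_eq]
  rw [Finset.sum_congr rfl (fun a ha => by rw [hbasis a ha])] at h2
  rw [← h2]
  simp [eq_comm]

open Finset MvPolynomial in
lemma cn_coeff_zero {F : Type*} [Field F] [DecidableEq F] {d : ℕ}
    (A : Fin d → Finset F) (hne : ∀ i, (A i).Nonempty)
    (f : MvPolynomial (Fin d) F)
    (hdeg : f.totalDegree ≤ ∑ i, ((A i).card - 1))
    (hvan : ∀ a ∈ Fintype.piFinset A, MvPolynomial.eval a f = 0) :
    MvPolynomial.coeff (Finsupp.equivFunOnFinite.symm (fun i => (A i).card - 1)) f = 0 := by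
  classical
  set t : Fin d →₀ ℕ := Finsupp.equivFunOnFinite.symm (fun i => (A i).card - 1) with ht
  have htapp : ∀ i, t i = (A i).card - 1 := fun i => rfl
  set w : Fin d → F → F := fun i x => ∏ b ∈ (A i).erase x, (x - b)⁻¹ with hw
  set S : Fin d → ℕ → F := fun i e => ∑ a ∈ A i, a ^ e * w i a with hS
  have hSval : ∀ i e, e < (A i).card →
      S i e = if e = (A i).card - 1 then 1 else 0 := fun i e he =>
    lagrange_power_sum (A i) e he
  have hSprod : ∀ e : Fin d →₀ ℕ, (∏ i, S i (e i)) =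
      ∑ a ∈ Fintype.piFinset A, ∏ i, ((a i) ^ (e i) * w i (a i)) :=
    fun e => Finset.prod_univ_sum _ _
  have expand : ∑ a ∈ Fintype.piFinset A, MvPolynomial.eval a f * ∏ i, w i (a i)
      = ∑ e ∈ f.support, MvPolynomial.coeff e f * ∏ i, S i (e i) := by
    simp_rw [MvPolynomial.eval_eq', Finset.sum_mul]
    rw [Finset.sum_comm]
    refine Finset.sum_congr rfl fun e _ => ?_
    rw [hSprod e, Finset.mul_sum]
    refine Finset.sum_congr rfl fun a _ => ?_
    rw [Finset.prod_mul_distrib, mul_assoc]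
  have hzero : ∑ a ∈ Fintype.piFinset A, MvPolynomial.eval a f * ∏ i, w i (a i) = 0 :=
    Finset.sum_eq_zero fun a ha => by rw [hvan a ha, zero_mul]
  have hsum : ∑ e ∈ f.support, MvPolynomial.coeff e f * ∏ i, S i (e i)
      = MvPolynomial.coeff t f * ∏ i, S i (t i) := by
    refine Finset.sum_eq_single t ?_ ?_
    · intro e hesupp het
      have hesum : ∑ i, e i ≤ ∑ i, ((A i).card - 1) := by
        refine le_trans ?_ hdeg
        have := MvPolynomial.le_totalDegree hesupp
        rwa [Finsupp.sum_fintype _ _ (fun i => rfl)] at this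
      have hex : ∃ i, e i < (A i).card - 1 := by
        by_contra hno
        push_neg at hno
        obtain ⟨i0, hi0⟩ : ∃ i0, e i0 ≠ t i0 := by
          by_contra hall
          push_neg at hall
          exact het (Finsupp.ext hall)
        have hlt : ∑ i, t i < ∑ i, e i := by
          refine Finset.sum_lt_sum (fun i _ => ?_) ⟨i0, Finset.mem_univ i0, ?_⟩
          · rw [htapp i]; exact hno i
          · rw [htapp i0]
            exact lt_of_le_of_ne (hno i0) (fun hh => hi0 (by rw [htapp i0, hh]))
        have heqt : ∑ i, t i = ∑ i, ((A i).card - 1) :=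
          Finset.sum_congr rfl fun i _ => htapp i
        rw [heqt] at hlt
        exact absurd hesum (not_le.mpr hlt)
      obtain ⟨i, hi⟩ := hex
      have hz : S i (e i) = 0 := by
        rw [hSval i (e i) (lt_of_lt_of_le hi (Nat.sub_le _ _)), if_neg (Nat.ne_of_lt hi)]
      rw [Finset.prod_eq_zero (Finset.mem_univ i) hz, mul_zero]
    · intro htne
      rw [MvPolynomial.notMem_support_iff.mp htne, zero_mul]
  have hprod1 : ∏ i, S i (t i) = 1 := by
    refine Finset.prod_eq_one fun i _ => ?_
    rw [htapp i, hSval i _ (Nat.sub_lt (hne i).card_pos one_pos), if_pos rfl]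
  rw [expand, hsum, hprod1, mul_one] at hzero
  exact hzero


open Finset in
lemma nat_fact_multinomial {d : ℕ} (k2 g : Fin d → ℕ) (h : ∀ i, g i ≤ k2 i) :
    (∏ i, (k2 i).factorial) * Nat.multinomial Finset.univ (fun i => k2 i - g i)
      = (∑ i, (k2 i - g i)).factorial * ∏ i, ((g i).factorial * (k2 i).choose (g i)) := by
  calc (∏ i, (k2 i).factorial) * Nat.multinomial Finset.univ (fun i => k2 i - g i)
      = (∏ i, (k2 i).choose (g i) * (g i).factorial * (k2 i - g i).factorial) *
          Nat.multinomial Finset.univ (fun i => k2 i - g i) := by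
        rw [Finset.prod_congr rfl fun i _ => (Nat.choose_mul_factorial_mul_factorial (h i)).symm]
    _ = ((∏ i, (k2 i).choose (g i)) * (∏ i, (g i).factorial)) *
          ((∏ i, (k2 i - g i).factorial) * Nat.multinomial Finset.univ (fun i => k2 i - g i)) := by
        rw [Finset.prod_mul_distrib, Finset.prod_mul_distrib]; ring
    _ = ((∏ i, (k2 i).choose (g i)) * (∏ i, (g i).factorial)) * (∑ i, (k2 i - g i)).factorial := by
        rw [Nat.multinomial_spec]
    _ = _ := by rw [Finset.prod_mul_distrib]; ring

open Finset in
lemma sum_two_mul_fin (d : ℕ) : ∑ j : Fin d, 2 * (j : ℕ) = d * (d - 1) := by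
  rw [← Finset.mul_sum, Fin.sum_univ_eq_sum_range (fun i => i), mul_comm,
    Finset.sum_range_id_mul_two]

open Finset MvPolynomial in
lemma totalDegree_vandermonde_sq {F : Type*} [Field F] (d : ℕ) :
    ((Matrix.vandermonde (fun i : Fin d => (MvPolynomial.X i : MvPolynomial (Fin d) F) ^ 2)).det).totalDegree
      ≤ d * (d - 1) := by
  rw [Matrix.det_vandermonde]
  have h2 : ∀ i j : Fin d,
      ((MvPolynomial.X j : MvPolynomial (Fin d) F) ^ 2 - MvPolynomial.X i ^ 2).totalDegree ≤ 2 :=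
    fun i j => le_trans (MvPolynomial.totalDegree_sub _ _)
      (by simp [MvPolynomial.totalDegree_X_pow])
  calc (∏ i : Fin d, ∏ j ∈ Finset.Ioi i,
        ((MvPolynomial.X j : MvPolynomial (Fin d) F) ^ 2 - MvPolynomial.X i ^ 2)).totalDegree
      ≤ ∑ i : Fin d, (∏ j ∈ Finset.Ioi i,
        ((MvPolynomial.X j : MvPolynomial (Fin d) F) ^ 2 - MvPolynomial.X i ^ 2)).totalDegree :=
        MvPolynomial.totalDegree_finset_prod _ _
    _ ≤ ∑ i : Fin d, ∑ _j ∈ Finset.Ioi i, 2 := by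
        refine Finset.sum_le_sum fun i _ => ?_
        refine le_trans (MvPolynomial.totalDegree_finset_prod _ _) ?_
        exact Finset.sum_le_sum fun j _ => h2 i j
    _ = d * (d - 1) := by
        have h3 : ∀ i : Fin d, ∑ _j ∈ Finset.Ioi i, 2 = 2 * (d - 1 - (i : ℕ)) := by
          intro i
          rw [Finset.sum_const, Fin.card_Ioi, smul_eq_mul, mul_comm]
        rw [Finset.sum_congr rfl fun i _ => h3 i, ← Finset.mul_sum,
          Fin.sum_univ_eq_sum_range (fun i => d - 1 - i),
          Finset.sum_range_reflect (fun i => i), mul_comm, Finset.sum_range_id_mul_two]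


open Finset MvPolynomial in
lemma prod_X_pow_eq_monomial' {F : Type*} [CommSemiring F] {d : ℕ} (g : Fin d → ℕ) :
    (∏ j, (MvPolynomial.X j : MvPolynomial (Fin d) F) ^ g j)
      = MvPolynomial.monomial (Finsupp.equivFunOnFinite.symm g) 1 := by
  rw [MvPolynomial.monomial_eq, map_one, one_mul,
    Finsupp.prod_fintype _ _ (fun i => pow_zero _)]
  rfl

open Finset in
lemma sum_two_mul_fin' (d : ℕ) : ∑ j : Fin d, 2 * (j : ℕ) = d * (d - 1) := by
  rw [← Finset.mul_sum, Fin.sum_univ_eq_sum_range (fun i => i), mul_comm,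
    Finset.sum_range_id_mul_two]


open Finset MvPolynomial in
lemma coeff_sum_X_pow {F : Type*} [Field F] {d : ℕ} (M : ℕ) (e : Fin d →₀ ℕ) :
    MvPolynomial.coeff e ((∑ i, MvPolynomial.X i) ^ M : MvPolynomial (Fin d) F) =
      if (∑ i, e i) = M then (Nat.multinomial Finset.univ e : F) else 0 := by
  rw [Finset.sum_pow_eq_sum_piAntidiag, MvPolynomial.coeff_sum]
  have hterm : ∀ g : Fin d → ℕ,
      MvPolynomial.coeff e ((Nat.multinomial Finset.univ g : MvPolynomial (Fin d) F)
        * ∏ i, MvPolynomial.X i ^ g i)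
      = if g = ⇑e then (Nat.multinomial Finset.univ g : F) else 0 := by
    intro g
    have hm : (∏ i, (MvPolynomial.X i : MvPolynomial (Fin d) F) ^ g i)
        = MvPolynomial.monomial (Finsupp.equivFunOnFinite.symm g) 1 := by
      rw [MvPolynomial.monomial_eq, map_one, one_mul,
        Finsupp.prod_fintype _ _ (fun i => pow_zero _)]
      rfl
    rw [hm, ← map_natCast (MvPolynomial.C : F →+* MvPolynomial (Fin d) F),
      MvPolynomial.coeff_C_mul, MvPolynomial.coeff_monomial]
    have : (Finsupp.equivFunOnFinite.symm g = e) ↔ (g = ⇑e) := by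
      constructor
      · intro h; rw [← h]; rfl
      · intro h; rw [h, Finsupp.equivFunOnFinite_symm_coe]
    rw [if_congr this rfl rfl]
    split_ifs <;> simp
  rw [Finset.sum_congr rfl (fun g _ => hterm g)]
  by_cases h : (∑ i, e i) = M
  · rw [if_pos h, Finset.sum_eq_single_of_mem (⇑e)
      (by rw [Finset.mem_piAntidiag]; exact ⟨h, fun i _ => Finset.mem_univ i⟩)
      (fun g _ hg => if_neg hg), if_pos rfl]
  · rw [if_neg h]
    refine Finset.sum_eq_zero fun g hg => ?_
    rw [Finset.mem_piAntidiag] at hg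
    refine if_neg fun hge => h ?_
    rw [← hg.1]
    exact Finset.sum_congr rfl fun i _ => by rw [hge]


open Finset MvPolynomial Equiv in
lemma coeff_V_mul_sum_pow {F : Type*} [Field F] {d : ℕ} (k2 : Fin d → ℕ) (Mn : ℕ)
    (hsum : ∑ i, k2 i = Mn + d * (d - 1)) :
    MvPolynomial.coeff (Finsupp.equivFunOnFinite.symm k2)
      ((Matrix.vandermonde fun i : Fin d => (MvPolynomial.X i : MvPolynomial (Fin d) F) ^ 2).det
        * (∑ i, MvPolynomial.X i) ^ Mn)
    = ∑ σ : Equiv.Perm (Fin d), ((Equiv.Perm.sign σ : ℤ) : F) *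
        (if ∀ i, 2 * ((σ i : Fin d) : ℕ) ≤ k2 i
          then (Nat.multinomial Finset.univ (fun i => k2 i - 2 * ((σ i : Fin d) : ℕ)) : F)
          else 0) := by
  classical
  set t : Fin d →₀ ℕ := Finsupp.equivFunOnFinite.symm k2 with ht
  have hV : (Matrix.vandermonde fun i : Fin d =>
        (MvPolynomial.X i : MvPolynomial (Fin d) F) ^ 2).det
      = ∑ σ : Equiv.Perm (Fin d), ((Equiv.Perm.sign σ : ℤ) : MvPolynomial (Fin d) F) *
          ∏ j, MvPolynomial.X j ^ (2 * ((σ⁻¹ j : Fin d) : ℕ)) := by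
    rw [Matrix.det_apply']
    refine Finset.sum_congr rfl fun σ _ => ?_
    congr 1
    have hre := Equiv.prod_comp σ
      (fun j => (MvPolynomial.X j : MvPolynomial (Fin d) F) ^ (2 * ((σ⁻¹ j : Fin d) : ℕ)))
    simp only [show ∀ i, σ⁻¹ (σ i) = i from fun i => σ.symm_apply_apply i] at hre
    rw [← hre]
    refine Finset.prod_congr rfl fun i _ => ?_
    rw [Matrix.vandermonde_apply, ← pow_mul]
  rw [hV, Finset.sum_mul, MvPolynomial.coeff_sum]
  have hterm : ∀ σ : Equiv.Perm (Fin d),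
      MvPolynomial.coeff t (((Equiv.Perm.sign σ : ℤ) : MvPolynomial (Fin d) F) *
          (∏ j, MvPolynomial.X j ^ (2 * ((σ⁻¹ j : Fin d) : ℕ))) * (∑ i, MvPolynomial.X i) ^ Mn)
      = ((Equiv.Perm.sign σ : ℤ) : F) *
        (if ∀ i, 2 * ((σ⁻¹ i : Fin d) : ℕ) ≤ k2 i
          then (Nat.multinomial Finset.univ (fun i => k2 i - 2 * ((σ⁻¹ i : Fin d) : ℕ)) : F)
          else 0) := by
    intro σ
    set g : Fin d → ℕ := fun j => 2 * ((σ⁻¹ j : Fin d) : ℕ) with hg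
    set u : Fin d →₀ ℕ := Finsupp.equivFunOnFinite.symm g with hu
    have hgu : ∀ i, u i = g i := fun i => rfl
    have hti : ∀ i, t i = k2 i := fun i => rfl
    rw [mul_assoc, ← map_intCast (MvPolynomial.C : F →+* MvPolynomial (Fin d) F),
      MvPolynomial.coeff_C_mul]
    congr 1
    rw [prod_X_pow_eq_monomial', ← hu, MvPolynomial.coeff_monomial_mul', coeff_sum_X_pow]
    have hcond : (u ≤ t) ↔ ∀ i, g i ≤ k2 i := by
      rw [Finsupp.le_def]
      exact forall_congr' fun i => by rw [hgu, hti]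
    by_cases hle : ∀ i, g i ≤ k2 i
    · rw [if_pos (hcond.mpr hle), if_pos hle]
      have htu : ∀ i, (t - u) i = k2 i - g i := fun i => by
        rw [Finsupp.tsub_apply, hgu, hti]
      have hsub : ∑ i, (k2 i - g i) = Mn := by
        have h1 : ∑ i, (k2 i - g i) + ∑ i, g i = ∑ i, k2 i := by
          rw [← Finset.sum_add_distrib]
          exact Finset.sum_congr rfl fun i _ => Nat.sub_add_cancel (hle i)
        have h2 : ∑ i, g i = d * (d - 1) := by
          rw [hg]
          have := Equiv.sum_comp σ⁻¹ (fun j => 2 * ((j : Fin d) : ℕ))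
          rw [this, sum_two_mul_fin']
        omega
      have hsum2 : ∑ i, (t - u) i = Mn := by
        rw [Finset.sum_congr rfl fun i _ => htu i, hsub]
      rw [if_pos hsum2, one_mul]
      have hfun : ⇑(t - u) = fun i => k2 i - g i := funext fun i => htu i
      rw [hfun]
    · rw [if_neg (fun h => hle (hcond.mp h)), if_neg hle]
  rw [Finset.sum_congr rfl fun σ _ => hterm σ]
  exact Fintype.sum_equiv (Equiv.inv (Equiv.Perm (Fin d))) _ _ (fun σ => by
    simp only [Equiv.inv_apply, Equiv.Perm.sign_inv])


open Finset in
lemma nat_fact_multinomial' {d : ℕ} (k2 g : Fin d → ℕ) (h : ∀ i, g i ≤ k2 i) :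
    (∏ i, (k2 i).factorial) * Nat.multinomial Finset.univ (fun i => k2 i - g i)
      = (∑ i, (k2 i - g i)).factorial * ∏ i, ((g i).factorial * (k2 i).choose (g i)) := by
  calc (∏ i, (k2 i).factorial) * Nat.multinomial Finset.univ (fun i => k2 i - g i)
      = (∏ i, (k2 i).choose (g i) * (g i).factorial * (k2 i - g i).factorial) *
          Nat.multinomial Finset.univ (fun i => k2 i - g i) := by
        rw [Finset.prod_congr rfl fun i _ => (Nat.choose_mul_factorial_mul_factorial (h i)).symm]
    _ = ((∏ i, (k2 i).choose (g i)) * (∏ i, (g i).factorial)) *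
          ((∏ i, (k2 i - g i).factorial) * Nat.multinomial Finset.univ (fun i => k2 i - g i)) := by
        rw [Finset.prod_mul_distrib, Finset.prod_mul_distrib]; ring
    _ = ((∏ i, (k2 i).choose (g i)) * (∏ i, (g i).factorial)) * (∑ i, (k2 i - g i)).factorial := by
        rw [Nat.multinomial_spec]
    _ = _ := by rw [Finset.prod_mul_distrib]; ring

open Finset in
lemma sum_two_mul_fin'' (d : ℕ) : ∑ j : Fin d, 2 * (j : ℕ) = d * (d - 1) := by
  rw [← Finset.mul_sum, Fin.sum_univ_eq_sum_range (fun i => i), mul_comm,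
    Finset.sum_range_id_mul_two]

open Finset Equiv in
lemma key_identity {F : Type*} [Field F] {d : ℕ} (k2 : Fin d → ℕ) (Mn : ℕ)
    (hsum : ∑ i, k2 i = Mn + d * (d - 1)) :
    (∏ j, ((k2 j).factorial : F)) *
      (∑ σ : Equiv.Perm (Fin d), ((Equiv.Perm.sign σ : ℤ) : F) *
        (if ∀ i, 2 * ((σ i : Fin d) : ℕ) ≤ k2 i
          then (Nat.multinomial Finset.univ (fun i => k2 i - 2 * ((σ i : Fin d) : ℕ)) : F)
          else 0))
    = ((Mn.factorial * ∏ j : Fin d, (2 * (j : ℕ)).factorial : ℕ) : F) *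
      (((Matrix.of fun j k : Fin d => ((k2 j).choose (2 * (k : ℕ)) : ℤ)).det : ℤ) : F) := by
  classical
  have hσ : ∀ σ : Equiv.Perm (Fin d),
      (∏ j, ((k2 j).factorial : F)) *
        (if ∀ i, 2 * ((σ i : Fin d) : ℕ) ≤ k2 i
          then (Nat.multinomial Finset.univ (fun i => k2 i - 2 * ((σ i : Fin d) : ℕ)) : F)
          else 0)
      = ((Mn.factorial * ∏ j : Fin d, (2 * (j : ℕ)).factorial : ℕ) : F) *
          ∏ i, ((k2 i).choose (2 * ((σ i : Fin d) : ℕ)) : F) := by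
    intro σ
    by_cases h : ∀ i, 2 * ((σ i : Fin d) : ℕ) ≤ k2 i
    · rw [if_pos h]
      have hg : ∑ i, (k2 i - 2 * ((σ i : Fin d) : ℕ)) = Mn := by
        have h1 : ∑ i, (k2 i - 2 * ((σ i : Fin d) : ℕ)) + ∑ i, 2 * ((σ i : Fin d) : ℕ)
            = ∑ i, k2 i := by
          rw [← Finset.sum_add_distrib]
          exact Finset.sum_congr rfl fun i _ => Nat.sub_add_cancel (h i)
        have h2 : ∑ i, 2 * ((σ i : Fin d) : ℕ) = d * (d - 1) := by
          rw [Equiv.sum_comp σ (fun j => 2 * ((j : Fin d) : ℕ)), sum_two_mul_fin'']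
        omega
      have hnat := nat_fact_multinomial' k2 (fun i => 2 * ((σ i : Fin d) : ℕ)) h
      rw [hg] at hnat
      have hF := congrArg (Nat.cast : ℕ → F) hnat
      push_cast at hF
      rw [hF]
      have hperm : ∏ i, ((2 * ((σ i : Fin d) : ℕ)).factorial : F)
          = ∏ j : Fin d, ((2 * (j : ℕ)).factorial : F) :=
        Equiv.prod_comp σ (fun j => ((2 * ((j : Fin d) : ℕ)).factorial : F))
      rw [Finset.prod_mul_distrib, hperm]
      push_cast
      ring
    · rw [if_neg h]
      push_neg at h
      obtain ⟨i, hi⟩ := h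
      rw [mul_zero]
      exact (mul_eq_zero_of_right _ (Finset.prod_eq_zero (Finset.mem_univ i)
        (by rw [Nat.choose_eq_zero_of_lt hi, Nat.cast_zero]))).symm
  have hdet : (Matrix.of fun j k : Fin d => ((k2 j).choose (2 * (k : ℕ)) : ℤ)).det
      = ∑ σ : Equiv.Perm (Fin d), ((Equiv.Perm.sign σ : ℤ)) *
          ∏ i, ((k2 i).choose (2 * ((σ i : Fin d) : ℕ)) : ℤ) := by
    rw [← Matrix.det_transpose, Matrix.det_apply']
    exact Finset.sum_congr rfl fun σ _ => rfl
  rw [hdet, Int.cast_sum, Finset.mul_sum, Finset.mul_sum]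
  refine Finset.sum_congr rfl fun σ _ => ?_
  rw [Int.cast_mul, Int.cast_prod]
  have hcc : ∀ i : Fin d, ((((k2 i).choose (2 * ((σ i : Fin d) : ℕ)) : ℤ) : F))
      = ((k2 i).choose (2 * ((σ i : Fin d) : ℕ)) : F) := fun i => by push_cast; rfl
  rw [Finset.prod_congr rfl fun i _ => hcc i, ← mul_assoc,
    mul_comm (∏ j, ((k2 j).factorial : F)) (((Equiv.Perm.sign σ : ℤ) : F)), mul_assoc, hσ σ]
  ring

open Finset MvPolynomial in
/-- Lemma (polynomial method, key counting lemma): let `F` be a field of prime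
characteristic `p` and `A_1, …, A_d` nonempty finite subsets of `F` with `|A_i| = k_i`.
If (i) `0 ≤ ∑ (k_i − 1) − d(d−1) < p`, (ii) `2d < p`, and (iii) the binomial
determinant `det(C(k_j − 1, 2(k−1)))_{1≤j,k≤d}` is not divisible by `p`, then
`C = { a_1 + ⋯ + a_d : a_i ∈ A_i, a_i ≠ ±a_j for i ≠ j }` has cardinality
`|C| ≥ ∑ (k_i − 1) − d(d−1) + 1`. -/
theorem polynomial_method_sumset_bound (F : Type*) [Field F] [DecidableEq F]
    (p : ℕ) (hp : p.Prime) [CharP F p] (d : ℕ) (hd : 1 ≤ d)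
    (A : Fin d → Finset F) (hne : ∀ i, (A i).Nonempty)
    (m : ℤ) (hm : m = (∑ i, ((A i).card - 1 : ℤ)) - d * (d - 1))
    (hm0 : 0 ≤ m) (hmp : m < p) (h2d : 2 * d < p)
    (hdet : ¬ (p : ℤ) ∣ Matrix.det (Matrix.of fun j k : Fin d =>
      (((A j).card - 1).choose (2 * (k : ℕ)) : ℤ))) :
    m + 1 ≤ ((Fintype.piFinset A).filter
        (fun a : Fin d → F => ∀ i j, i ≠ j → a i ≠ a j ∧ a i ≠ -a j)
      |>.image (fun a => ∑ i, a i)).card := by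
  classical
  by_contra hcon
  push_neg at hcon
  set img := ((Fintype.piFinset A).filter
      (fun a : Fin d → F => ∀ i j, i ≠ j → a i ≠ a j ∧ a i ≠ -a j)
    |>.image (fun a => ∑ i, a i)) with himg
  set k2 : Fin d → ℕ := fun i => (A i).card - 1 with hk2
  have hk1 : ∀ i, 1 ≤ (A i).card := fun i => (hne i).card_pos
  set M : ℕ := m.toNat with hMdef
  have hMm : (M : ℤ) = m := Int.toNat_of_nonneg hm0
  set n : ℕ := ∑ i, k2 i with hn
  have hnM : n = M + d * (d - 1) := by
    have h1 : (n : ℤ) = ∑ i, ((A i).card - 1 : ℤ) := by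
      rw [hn]
      push_cast
      refine Finset.sum_congr rfl fun i _ => ?_
      have h := hk1 i
      rw [hk2]
      push_cast [Nat.cast_sub h]
      ring
    have h2 : ((d : ℤ) - 1) = ((d - 1 : ℕ) : ℤ) := by
      push_cast [Nat.cast_sub hd]; ring
    have h3 : (n : ℤ) = (M : ℤ) + (d : ℤ) * ((d - 1 : ℕ) : ℤ) := by
      rw [h1, ← h2, hMm, hm]; ring
    exact_mod_cast h3
  have hMp : M < p := by
    have : (M : ℤ) < p := by rw [hMm]; exact hmp
    exact_mod_cast this
  have hsmall : img.card ≤ M := by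
    have h : (img.card : ℤ) ≤ m := by linarith [hcon]
    rw [← hMm] at h
    exact_mod_cast h
  obtain ⟨C', hC'sub, hC'card⟩ : ∃ C' : Finset F, img ⊆ C' ∧ C'.card = M := by
    have hinj : Set.InjOn (Nat.cast : ℕ → F) ↑(Finset.range p) := by
      refine (CharP.natCast_injOn_Iio F p).mono ?_
      intro x hx
      simpa using Finset.mem_range.mp (by simpa using hx)
    have hpT : p ≤ (img ∪ (Finset.range p).image (Nat.cast : ℕ → F)).card := by
      have h1 : ((Finset.range p).image (Nat.cast : ℕ → F)).card = p := by
        rw [Finset.card_image_of_injOn hinj, Finset.card_range]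
      calc p = ((Finset.range p).image (Nat.cast : ℕ → F)).card := h1.symm
        _ ≤ _ := Finset.card_le_card Finset.subset_union_right
    obtain ⟨u, hu1, _, hu3⟩ := Finset.exists_subsuperset_card_eq
      (Finset.subset_union_left (s₂ := (Finset.range p).image (Nat.cast : ℕ → F)))
      hsmall (le_trans (le_of_lt hMp) hpT)
    exact ⟨u, hu1, hu3⟩
  set S : MvPolynomial (Fin d) F := ∑ i, MvPolynomial.X i with hS
  set V : MvPolynomial (Fin d) F :=
    (Matrix.vandermonde fun i : Fin d => (MvPolynomial.X i : MvPolynomial (Fin d) F) ^ 2).det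
    with hV
  set P : MvPolynomial (Fin d) F := ∏ c ∈ C', (S - MvPolynomial.C c) with hP
  set f : MvPolynomial (Fin d) F := V * P with hf
  have htdS : S.totalDegree ≤ 1 := by
    refine le_trans (MvPolynomial.totalDegree_finset_sum _ _) ?_
    refine Finset.sup_le fun i _ => ?_
    rw [MvPolynomial.totalDegree_X]
  have htdV : V.totalDegree ≤ d * (d - 1) := totalDegree_vandermonde_sq d
  -- vanishing on the grid
  have hvan : ∀ a ∈ Fintype.piFinset A, MvPolynomial.eval a f = 0 := by
    intro a ha
    rw [hf, map_mul]
    by_cases hreg : ∀ i j, i ≠ j → a i ≠ a j ∧ a i ≠ -a j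
    · have hmem : (∑ i, a i) ∈ C' := by
        refine hC'sub ?_
        rw [himg]
        exact Finset.mem_image_of_mem _ (Finset.mem_filter.mpr ⟨ha, hreg⟩)
      have hz : MvPolynomial.eval a P = 0 := by
        rw [hP, map_prod]
        refine Finset.prod_eq_zero hmem ?_
        rw [map_sub, MvPolynomial.eval_C, hS, map_sum]
        simp only [MvPolynomial.eval_X]
        exact sub_self _
      rw [hz, mul_zero]
    · push_neg at hreg
      obtain ⟨i, j, hij, hcase⟩ := hreg
      have hsq : (a i) ^ 2 = (a j) ^ 2 := by
        by_cases h : a i = a j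
        · rw [h]
        · rw [hcase h]; exact neg_sq (a j)
      have hVz : MvPolynomial.eval a V = 0 := by
        rw [hV, Matrix.det_vandermonde, map_prod]
        rcases lt_or_gt_of_ne hij with hlt | hlt
        · refine Finset.prod_eq_zero (Finset.mem_univ i) ?_
          rw [map_prod]
          refine Finset.prod_eq_zero (Finset.mem_Ioi.mpr hlt) ?_
          rw [map_sub, map_pow, map_pow, MvPolynomial.eval_X, MvPolynomial.eval_X, ← hsq]
          exact sub_self _
        · refine Finset.prod_eq_zero (Finset.mem_univ j) ?_
          rw [map_prod]
          refine Finset.prod_eq_zero (Finset.mem_Ioi.mpr hlt) ?_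
          rw [map_sub, map_pow, map_pow, MvPolynomial.eval_X, MvPolynomial.eval_X, hsq]
          exact sub_self _
      rw [hVz, zero_mul]
  -- total degree bound
  have htdf : f.totalDegree ≤ ∑ i, ((A i).card - 1) := by
    refine le_trans (MvPolynomial.totalDegree_mul _ _) ?_
    have htdP : P.totalDegree ≤ M := by
      rw [hP]
      refine le_trans (MvPolynomial.totalDegree_finset_prod _ _) ?_
      calc ∑ c ∈ C', (S - MvPolynomial.C c).totalDegree
          ≤ ∑ _c ∈ C', 1 := by
            refine Finset.sum_le_sum fun c _ => ?_
            refine le_trans (MvPolynomial.totalDegree_sub _ _) ?_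
            exact max_le htdS (by rw [MvPolynomial.totalDegree_C]; exact zero_le_one)
        _ = M := by rw [Finset.sum_const, smul_eq_mul, mul_one, hC'card]
    calc V.totalDegree + P.totalDegree ≤ d * (d - 1) + M := add_le_add htdV htdP
      _ = n := by rw [hnM]; ring
      _ = _ := hn
  -- Combinatorial Nullstellensatz : top coefficient vanishes
  have hcoeff0 : MvPolynomial.coeff (Finsupp.equivFunOnFinite.symm k2) f = 0 :=
    cn_coeff_zero A hne f htdf hvan
  -- reduce to the leading part V * S^M
  have hVP : MvPolynomial.coeff (Finsupp.equivFunOnFinite.symm k2) (V * S ^ M)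
      = MvPolynomial.coeff (Finsupp.equivFunOnFinite.symm k2) f := by
    have hexp : P = ∑ u ∈ C'.powerset, S ^ u.card * MvPolynomial.C (∏ c ∈ C' \ u, (-c)) := by
      rw [hP]
      have h1 : ∀ c ∈ C', S - MvPolynomial.C c = S + MvPolynomial.C (-c) := fun c _ => by
        rw [map_neg, sub_eq_add_neg]
      rw [Finset.prod_congr rfl h1, Finset.prod_add]
      refine Finset.sum_congr rfl fun u hu => ?_
      rw [Finset.prod_const, map_prod]
    have htsupp : ∑ i ∈ (Finsupp.equivFunOnFinite.symm k2).support,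
        (Finsupp.equivFunOnFinite.symm k2) i = n := by
      rw [Finset.sum_subset (Finset.subset_univ _)
        (fun i _ hni => Finsupp.notMem_support_iff.mp hni)]
      exact hn.symm
    rw [hf, hexp, Finset.mul_sum, MvPolynomial.coeff_sum]
    rw [Finset.sum_eq_single_of_mem C' (Finset.mem_powerset_self C')
      (fun u hu hune => ?_)]
    · rw [Finset.sdiff_self, Finset.prod_empty, map_one, mul_one, hC'card]
    · have hlt : u.card < M := by
        rw [← hC'card]
        exact Finset.card_lt_card
          (ssubset_of_subset_of_ne (Finset.mem_powerset.mp hu) hune)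
      refine MvPolynomial.coeff_eq_zero_of_totalDegree_lt ?_
      rw [htsupp]
      calc (V * (S ^ u.card * MvPolynomial.C (∏ c ∈ C' \ u, (-c)))).totalDegree
          ≤ V.totalDegree + (S ^ u.card * MvPolynomial.C (∏ c ∈ C' \ u, (-c))).totalDegree :=
            MvPolynomial.totalDegree_mul _ _
        _ ≤ d * (d - 1) + (u.card * 1 + 0) := by
            refine add_le_add htdV (le_trans (MvPolynomial.totalDegree_mul _ _)
              (add_le_add ?_ ?_))
            · exact le_trans (MvPolynomial.totalDegree_pow _ _)
                (Nat.mul_le_mul_left _ htdS)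
            · rw [MvPolynomial.totalDegree_C]
        _ < n := by rw [hnM]; omega
  have hsum2 : ∑ i, k2 i = M + d * (d - 1) := by rw [← hn]; exact hnM
  have hcvs := coeff_V_mul_sum_pow (F := F) k2 M hsum2
  have hkey := key_identity (F := F) k2 M hsum2
  have h0 : (∑ σ : Equiv.Perm (Fin d), ((Equiv.Perm.sign σ : ℤ) : F) *
      (if ∀ i, 2 * ((σ i : Fin d) : ℕ) ≤ k2 i
        then (Nat.multinomial Finset.univ (fun i => k2 i - 2 * ((σ i : Fin d) : ℕ)) : F)
        else 0)) = 0 := by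
    rw [← hcvs]
    exact hVP.trans hcoeff0
  rw [h0, mul_zero] at hkey
  have hne1 : ((M.factorial * ∏ j : Fin d, (2 * (j : ℕ)).factorial : ℕ) : F) ≠ 0 := by
    intro h
    rw [CharP.cast_eq_zero_iff F p] at h
    rcases (Nat.Prime.dvd_mul hp).mp h with h | h
    · exact absurd ((Nat.Prime.dvd_factorial hp).mp h) (by omega)
    · obtain ⟨j, _, hj⟩ := (Prime.dvd_finset_prod_iff (Nat.Prime.prime hp) _).mp h
      have h1 := (Nat.Prime.dvd_factorial hp).mp hj
      have h2 : (j : ℕ) < d := j.isLt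
      omega
  have hne2 : (((Matrix.of fun j k : Fin d =>
      ((k2 j).choose (2 * (k : ℕ)) : ℤ)).det : ℤ) : F) ≠ 0 := by
    intro h
    rw [CharP.intCast_eq_zero_iff F p] at h
    exact hdet h
  exact absurd hkey.symm (mul_ne_zero hne1 hne2)
end

section
/- Let p be an odd prime number and let S be a zero-sum free finite sequence (multiset) of elements of ℤ/pℤ with exactly p−1 terms. Then some element g ∈ ℤ/pℤ has multiplicity at least p−1 in S; that is, all terms of S are equal. -/
open Multiset Finset

/-- The set of subsums (including the empty sum) of a multiset over `ZMod p`. -/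
def sigmaSet (p : ℕ) (S : Multiset (ZMod p)) : Finset (ZMod p) :=
  (S.powerset.map Multiset.sum).toFinset

lemma mem_sigmaSet {p : ℕ} {S : Multiset (ZMod p)} {x : ZMod p} :
    x ∈ sigmaSet p S ↔ ∃ T, T ≤ S ∧ T.sum = x := by
  simp [sigmaSet, Multiset.mem_powerset, eq_comm]

lemma zero_mem_sigmaSet {p : ℕ} (S : Multiset (ZMod p)) : 0 ∈ sigmaSet p S :=
  mem_sigmaSet.2 ⟨0, Multiset.zero_le _, rfl⟩

lemma sigmaSet_cons {p : ℕ} (a : ZMod p) (S : Multiset (ZMod p)) :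
    sigmaSet p (a ::ₘ S) = sigmaSet p S ∪ (sigmaSet p S).image (a + ·) := by
  unfold sigmaSet
  rw [Multiset.powerset_cons, Multiset.map_add, Multiset.toFinset_add,
    Multiset.map_map, Multiset.toFinset_map, Multiset.toFinset_map,
    Finset.image_image]
  congr 1
  apply Finset.image_congr
  intro t _
  simp [Multiset.sum_cons]

lemma sigma_card {p : ℕ} (hp : 1 ≤ p) (S : Multiset (ZMod p))
    (hzsf : ∀ T : Multiset (ZMod p), T ≤ S → T ≠ 0 → T.sum ≠ 0) :
    Multiset.card S + 1 ≤ (sigmaSet p S).card := by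
  induction S using Multiset.induction_on with
  | empty =>
    simp only [Multiset.card_zero]
    exact Finset.card_pos.2 ⟨0, zero_mem_sigmaSet 0⟩
  | cons a s ih =>
    have hzsf' : ∀ T : Multiset (ZMod p), T ≤ s → T ≠ 0 → T.sum ≠ 0 := fun T hT =>
      hzsf T (hT.trans (Multiset.le_cons_self s a))
    have IH := ih hzsf'
    -- -a is not a subsum of s
    have hna : (-a : ZMod p) ∉ sigmaSet p s := by
      intro h
      obtain ⟨T, hTs, hTsum⟩ := mem_sigmaSet.1 h
      exact hzsf (a ::ₘ T) (Multiset.cons_le_cons a hTs) (Multiset.cons_ne_zero)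
        (by simp [hTsum])
    -- find a new element in a + sigmaSet s
    have hex : ∃ x ∈ (sigmaSet p s).image (a + ·), x ∉ sigmaSet p s := by
      by_contra h
      push_neg at h
      have hsub : (sigmaSet p s).image (a + ·) ⊆ sigmaSet p s := h
      have heq : (sigmaSet p s).image (a + ·) = sigmaSet p s := by
        apply Finset.eq_of_subset_of_card_le hsub
        rw [Finset.card_image_of_injective _ (add_right_injective a)]
      have hclosed : ∀ x ∈ sigmaSet p s, a + x ∈ sigmaSet p s := by
        intro x hx
        rw [← heq]
        exact Finset.mem_image_of_mem _ hx
      have hmul : ∀ n : ℕ, (n : ZMod p) * a ∈ sigmaSet p s := by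
        intro n
        induction n with
        | zero => simpa using zero_mem_sigmaSet s
        | succ m ihm =>
          have := hclosed _ ihm
          convert this using 1
          push_cast
          ring
      have : (-a : ZMod p) ∈ sigmaSet p s := by
        have := hmul (p - 1)
        have hcast : ((p - 1 : ℕ) : ZMod p) = -1 := by
          have : ((p - 1 : ℕ) : ZMod p) = (p : ZMod p) - 1 := by
            push_cast [Nat.cast_sub hp]; ring
          rw [this, ZMod.natCast_self]; ring
        rwa [hcast, neg_one_mul] at this
      exact hna this
    obtain ⟨x, hx1, hx2⟩ := hex
    have hsubset : insert x (sigmaSet p s) ⊆ sigmaSet p (a ::ₘ s) := by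
      rw [sigmaSet_cons]
      intro y hy
      rcases Finset.mem_insert.1 hy with rfl | hy
      · exact Finset.mem_union_right _ hx1
      · exact Finset.mem_union_left _ hy
    calc Multiset.card (a ::ₘ s) + 1 = (Multiset.card s + 1) + 1 := by
          rw [Multiset.card_cons]
      _ ≤ (sigmaSet p s).card + 1 := by omega
      _ = (insert x (sigmaSet p s)).card := by rw [Finset.card_insert_of_notMem hx2]
      _ ≤ (sigmaSet p (a ::ₘ s)).card := Finset.card_le_card hsubset

/-- Corollary: let `p` be an odd prime and `S` a zero-sum free finite sequence
(multiset) of elements of `ℤ/pℤ` with exactly `p − 1` terms. Then some element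
`g ∈ ℤ/pℤ` has multiplicity at least `p − 1` in `S`; that is, all terms of `S`
are equal. -/
theorem zero_sum_free_sequence_of_length_p_sub_one_is_constant (p : ℕ) (hp : p.Prime)
    (hodd : Odd p) (S : Multiset (ZMod p)) (hcard : Multiset.card S = p - 1)
    (hzsf : ∀ T : Multiset (ZMod p), T ≤ S → T ≠ 0 → T.sum ≠ 0) :
    ∃ g : ZMod p, p - 1 ≤ S.count g := by
  have hp3 : 3 ≤ p := by
    obtain ⟨k, hk⟩ := hodd
    have := hp.two_le
    omega
  by_contra hcon
  push_neg at hcon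
  -- there exist two distinct elements a b in S
  have hSne : S ≠ 0 := by
    intro h; rw [h] at hcard; simp at hcard; omega
  obtain ⟨a, ha⟩ := Multiset.exists_mem_of_ne_zero hSne
  have hb : ∃ b ∈ S, b ≠ a := by
    by_contra h
    push_neg at h
    have : p - 1 ≤ S.count a := by
      have : S.count a = Multiset.card S := by
        rw [Multiset.count_eq_card.2 (fun b hb => (h b hb).symm)]
      omega
    exact absurd this (not_le.2 (hcon a))
  obtain ⟨b, hbS, hba⟩ := hb
  -- extract a and b from S
  obtain ⟨S', rfl⟩ := Multiset.exists_cons_of_mem ha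
  have hbS' : b ∈ S' := by
    rcases Multiset.mem_cons.1 hbS with h | h
    · exact absurd h hba
    · exact h
  obtain ⟨T, rfl⟩ := Multiset.exists_cons_of_mem hbS'
  -- basic facts
  have hTle : ∀ U : Multiset (ZMod p), U ≤ T → U ≤ a ::ₘ b ::ₘ T := fun U hU =>
    hU.trans ((Multiset.le_cons_self T b).trans (Multiset.le_cons_self _ a))
  have hzsfT : ∀ U : Multiset (ZMod p), U ≤ T → U ≠ 0 → U.sum ≠ 0 := fun U hU =>
    hzsf U (hTle U hU)
  have ha0 : a ≠ 0 := by
    intro h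
    exact hzsf {a} (Multiset.singleton_le.2 ha) (by simp) (by simp [h])
  have hb0 : b ≠ 0 := by
    intro h
    exact hzsf {b} (Multiset.singleton_le.2 hbS) (by simp) (by simp [h])
  -- -a, -b, -a-b are not subsums of T
  have hnota : (-a : ZMod p) ∉ sigmaSet p T := by
    intro h
    obtain ⟨U, hU, hsum⟩ := mem_sigmaSet.1 h
    refine hzsf (a ::ₘ U) ?_ (Multiset.cons_ne_zero) (by simp [hsum])
    exact Multiset.cons_le_cons a (hU.trans (Multiset.le_cons_self T b))
  have hnotb : (-b : ZMod p) ∉ sigmaSet p T := by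
    intro h
    obtain ⟨U, hU, hsum⟩ := mem_sigmaSet.1 h
    refine hzsf (b ::ₘ U) ?_ (Multiset.cons_ne_zero) (by simp [hsum])
    exact (Multiset.cons_le_cons b hU).trans (Multiset.le_cons_self _ a)
  have hnotab : (-a - b : ZMod p) ∉ sigmaSet p T := by
    intro h
    obtain ⟨U, hU, hsum⟩ := mem_sigmaSet.1 h
    refine hzsf (a ::ₘ b ::ₘ U) ?_ (Multiset.cons_ne_zero) ?_
    · exact Multiset.cons_le_cons a (Multiset.cons_le_cons b hU)
    · simp [hsum]
  -- three distinct missing values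
  have hdist1 : (-a : ZMod p) ≠ -b := fun h => hba (neg_injective h).symm
  have hdist2 : (-a - b : ZMod p) ≠ -a := fun h => hb0 (by linear_combination -h)
  have hdist3 : (-a - b : ZMod p) ≠ -b := fun h => ha0 (by linear_combination -h)
  -- counting
  have hcount := sigma_card (by omega) T hzsfT
  have hTcard : Multiset.card T + 2 = p - 1 := by
    simpa [Multiset.card_cons] using hcard
  have hdisj : Disjoint ({-a, -b, -a - b} : Finset (ZMod p)) (sigmaSet p T) := by
    simp only [Finset.disjoint_left, Finset.mem_insert, Finset.mem_singleton]
    rintro x (rfl | rfl | rfl) <;> assumption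
  haveI : NeZero p := ⟨by omega⟩
  have hunion : ({-a, -b, -a - b} : Finset (ZMod p)).card + (sigmaSet p T).card ≤ p := by
    rw [← Finset.card_union_of_disjoint hdisj]
    have := Finset.card_le_univ (({-a, -b, -a - b} : Finset (ZMod p)) ∪ sigmaSet p T)
    simpa [ZMod.card p] using this
  have h3 : ({-a, -b, -a - b} : Finset (ZMod p)).card = 3 := by
    have m1 : (-a : ZMod p) ∉ ({-b, -a - b} : Finset (ZMod p)) := by
      simp only [Finset.mem_insert, Finset.mem_singleton]
      push_neg
      exact ⟨hdist1, fun h => hdist2 h.symm⟩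
    have m2 : (-b : ZMod p) ∉ ({-a - b} : Finset (ZMod p)) := by
      simp only [Finset.mem_singleton]
      exact fun h => hdist3 h.symm
    rw [Finset.card_insert_of_notMem m1, Finset.card_insert_of_notMem m2,
      Finset.card_singleton]
  omega
end
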